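/- arXiv:1505.04228 — 6 statements merged into one kernel-verified Lean document; each statement's English description precedes it below -/
import Mathlib

section
/- Let η be a piecewise-constant population size function with K pieces: η(t) = N_k for t_{k−1} ≤ t < t_k (where t_0 = 0, t_K = ∞, and all N_k > 0). Then the expected first coalescence time for a sample of size m satisfies c_m = (1/a_m) · Σ_{k=1}^{K} N_k (exp(−a_m S_{k−1}) − exp(−a_m S_k)), where S_k = Σ_{j=1}^{k} (t_j − t_{j−1})/N_j, S_0 = 0, and exp(−a_m S_K) is interpreted as 0. -/
open MeasureTheory Set Filter Topology

lemma coal_hasDeriv (a N p s : ℝ) (ha : 0 < a) (hN : 0 < N) (x : ℝ) :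
    HasDerivAt (fun y => -(y + N / a) * Real.exp (-(a * (s + (y - p) / N))))
      (x * (a / N) * Real.exp (-(a * (s + (x - p) / N)))) x := by
  have hu : HasDerivAt (fun y : ℝ => -(a * (s + (y - p) / N))) (-(a / N)) x := by
    have h1 : (fun y : ℝ => -(a * (s + (y - p) / N)))
        = fun y : ℝ => (-(a / N)) * y + (a * p / N - a * s) := by
      funext y; field_simp; ring
    rw [h1]
    simpa using (HasDerivAt.const_mul (-(a/N)) (hasDerivAt_id x)).add_const (a * p / N - a * s)
  have hexp := hu.exp
  have hlin : HasDerivAt (fun y : ℝ => -(y + N / a)) (-1) x := by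
    have := ((hasDerivAt_id x).add_const (N / a)).neg
    exact this
  have := hlin.mul hexp
  refine this.congr_deriv ?_
  have hN' : N ≠ 0 := ne_of_gt hN
  have ha' : a ≠ 0 := ne_of_gt ha
  have h : N / a * (a / N) = 1 := by field_simp
  linear_combination (Real.exp (-(a * (s + (x - p) / N)))) * h

lemma coal_piece_fin (a N p s q : ℝ) (ha : 0 < a) (hN : 0 < N) :
    ∫ x in p..q, x * (a / N) * Real.exp (-(a * (s + (x - p) / N))) =
      (p + N / a) * Real.exp (-(a * s)) -
        (q + N / a) * Real.exp (-(a * (s + (q - p) / N))) := by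
  have hint : IntervalIntegrable
      (fun x => x * (a / N) * Real.exp (-(a * (s + (x - p) / N)))) volume p q := by
    apply Continuous.intervalIntegrable
    fun_prop
  rw [intervalIntegral.integral_eq_sub_of_hasDerivAt
    (fun x _ => coal_hasDeriv a N p s ha hN x) hint]
  have : (p - p) / N = 0 := by simp
  rw [this]
  ring_nf

lemma coal_tendsto (a N p s : ℝ) (ha : 0 < a) (hN : 0 < N) :
    Tendsto (fun y => -(y + N / a) * Real.exp (-(a * (s + (y - p) / N)))) atTop (𝓝 0) := by
  have hc : 0 < a / N := div_pos ha hN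
  have hN' : N ≠ 0 := ne_of_gt hN
  have ha' : a ≠ 0 := ne_of_gt ha
  set c := a / N with hcdef
  set d := a * s - a * p / N with hddef
  have hexp : ∀ y : ℝ, Real.exp (-(a * (s + (y - p) / N)))
      = Real.exp (-d) * Real.exp (-(c * y)) := by
    intro y
    rw [← Real.exp_add]
    congr 1
    rw [hcdef, hddef]
    field_simp
    ring
  have hct : Tendsto (fun y : ℝ => c * y) atTop atTop :=
    Tendsto.const_mul_atTop hc tendsto_id
  have h2 : Tendsto (fun y : ℝ => Real.exp (-(c * y))) atTop (𝓝 0) :=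
    Real.tendsto_exp_neg_atTop_nhds_zero.comp hct
  have h1 : Tendsto (fun y : ℝ => y * Real.exp (-(c * y))) atTop (𝓝 0) := by
    have h0 := (Real.tendsto_pow_mul_exp_neg_atTop_nhds_zero 1).comp hct
    have h0' := h0.const_mul (1 / c)
    rw [mul_zero] at h0'
    refine h0'.congr fun y => ?_
    simp only [Function.comp_apply, pow_one, Real.exp_neg]
    field_simp
  have hmain : Tendsto (fun y : ℝ =>
      -(Real.exp (-d) * (y * Real.exp (-(c * y)))
        + (N / a * Real.exp (-d)) * Real.exp (-(c * y)))) atTop (𝓝 0) := by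
    have := ((h1.const_mul (Real.exp (-d))).add (h2.const_mul (N / a * Real.exp (-d)))).neg
    simpa using this
  refine hmain.congr fun y => ?_
  rw [hexp y]
  ring

lemma coal_piece_inf (a N p s : ℝ) (ha : 0 < a) (hN : 0 < N) (hp : 0 ≤ p) :
    IntegrableOn (fun x => x * (a / N) * Real.exp (-(a * (s + (x - p) / N)))) (Ioi p) ∧
    ∫ x in Ioi p, x * (a / N) * Real.exp (-(a * (s + (x - p) / N))) =
      (p + N / a) * Real.exp (-(a * s)) := by
  have hcont : ContinuousWithinAt
      (fun y => -(y + N / a) * Real.exp (-(a * (s + (y - p) / N)))) (Ici p) p := by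
    apply Continuous.continuousWithinAt
    fun_prop
  have hderiv : ∀ x ∈ Ioi p,
      HasDerivAt (fun y => -(y + N / a) * Real.exp (-(a * (s + (y - p) / N))))
        (x * (a / N) * Real.exp (-(a * (s + (x - p) / N)))) x :=
    fun x _ => coal_hasDeriv a N p s ha hN x
  have hnonneg : ∀ x ∈ Ioi p,
      0 ≤ x * (a / N) * Real.exp (-(a * (s + (x - p) / N))) := by
    intro x hx
    have hx0 : 0 ≤ x := le_trans hp (le_of_lt hx)
    positivity
  have htend := coal_tendsto a N p s ha hN
  constructor
  · exact integrableOn_Ioi_deriv_of_nonneg hcont hderiv hnonneg htend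
  · rw [integral_Ioi_of_hasDerivAt_of_nonneg hcont hderiv hnonneg htend]
    have : (p - p) / N = 0 := by simp
    rw [this]
    ring_nf
/-- For a piecewise-constant population size function `η` with `K` pieces
(`η(x) = N_k` on `[t_{k-1}, t_k)`, `t_0 = 0`, `t_K = ∞`), the expected first coalescence
time for a sample of size `m` equals
`(1/a_m) Σ_{k=1}^K N_k (e^{-a_m S_{k-1}} - e^{-a_m S_k})` with `S_k = Σ_{j≤k}(t_j - t_{j-1})/N_j`
and the convention `e^{-a_m S_K} = 0` (so the last term is `N_K e^{-a_m S_{K-1}}`). -/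
theorem piecewise_constant_first_coal_time (K : ℕ) (hK : 1 ≤ K)
    (t : ℕ → ℝ) (ht0 : t 0 = 0)
    (htmono : ∀ i j, i < j → j ≤ K - 1 → t i < t j)
    (N : ℕ → ℝ) (hN : ∀ k, 1 ≤ k → k ≤ K → 0 < N k)
    (η : ℝ → ℝ)
    (hη : ∀ k, 1 ≤ k → k ≤ K - 1 → ∀ x, t (k - 1) ≤ x → x < t k → η x = N k)
    (hηlast : ∀ x, t (K - 1) ≤ x → η x = N K)
    (m : ℕ) (hm : 2 ≤ m) (a : ℝ) (ha : a = m * (m - 1) / 2)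
    (S : ℕ → ℝ) (hS : ∀ k, S k = ∑ j ∈ Finset.Icc 1 k, (t j - t (j - 1)) / N j) :
    ∫ x in Set.Ioi (0 : ℝ), x * (a / η x) * Real.exp (-(a * ∫ u in (0:ℝ)..x, 1 / η u)) =
      (1 / a) * ((∑ k ∈ Finset.Icc 1 (K - 1),
          N k * (Real.exp (-(a * S (k - 1))) - Real.exp (-(a * S k)))) +
        N K * Real.exp (-(a * S (K - 1)))) := by
  have ha' : 0 < a := by
    have h2 : (2:ℝ) ≤ (m:ℝ) := by exact_mod_cast hm
    rw [ha]; nlinarith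
  have ha0 : a ≠ 0 := ne_of_gt ha'
  have ht_nonneg : ∀ k, k ≤ K - 1 → 0 ≤ t k := by
    intro k hk
    rcases Nat.eq_zero_or_pos k with rfl | hk0
    · rw [ht0]
    · have := htmono 0 k hk0 hk; rw [ht0] at this; exact this.le
  have piece_int : ∀ j, 1 ≤ j → j ≤ K → ∀ x y, t (j-1) ≤ x → x ≤ y →
      (j ≤ K - 1 → y ≤ t j) →
      IntervalIntegrable (fun u => 1/η u) volume x y ∧
      (∫ u in x..y, 1/η u) = (y - x) / N j := by
    intro j hj1 hjK x y hx hxy hy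
    have hNj := hN j hj1 hjK
    have heq : ∀ᵐ u ∂volume, u ∈ Set.Ioc x y → 1/η u = 1/N j := by
      by_cases hcase : j ≤ K - 1
      · rw [ae_iff]
        refine measure_mono_null ?_ (Real.volume_singleton (a := t j))
        intro u hu
        simp only [Set.mem_setOf_eq, Classical.not_imp] at hu
        obtain ⟨hu1, hu2⟩ := hu
        by_contra hne
        apply hu2
        rw [hη j hj1 hcase u (le_trans hx hu1.1.le)
          (lt_of_le_of_ne (le_trans hu1.2 (hy hcase)) (by simpa using hne))]
      · have hjK' : j = K := by omega
        subst hjK'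
        exact Filter.Eventually.of_forall fun u hu => by
          rw [hηlast u (le_trans hx hu.1.le)]
    have heq' : (fun _ : ℝ => 1/N j) =ᵐ[volume.restrict (Set.Ioc x y)] fun u => 1/η u :=
      (ae_restrict_iff' measurableSet_Ioc).2 (heq.mono fun u h hu => (h hu).symm)
    constructor
    · rw [intervalIntegrable_iff_integrableOn_Ioc_of_le hxy]
      have hconst : IntegrableOn (fun _ : ℝ => 1/N j) (Set.Ioc x y) volume :=
        integrableOn_const measure_Ioc_lt_top.ne
      exact hconst.congr heq'
    · rw [intervalIntegral.integral_congr_ae' heq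
        (Filter.Eventually.of_forall fun u hu =>
          absurd (hu.1.trans_le (hu.2.trans hxy)) (lt_irrefl _)),
        intervalIntegral.integral_const, smul_eq_mul]
      ring
  have Rt : ∀ k, k ≤ K - 1 → IntervalIntegrable (fun u => 1/η u) volume 0 (t k) ∧
      (∫ u in (0:ℝ)..(t k), 1/η u) = S k := by
    intro k
    induction k with
    | zero =>
      intro _
      rw [ht0]
      constructor
      · rw [intervalIntegrable_iff]
        simp
      · rw [intervalIntegral.integral_same, hS, Finset.Icc_eq_empty (by omega),
          Finset.sum_empty]
    | succ n ih =>
      intro hk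
      have hn : n ≤ K - 1 := by omega
      obtain ⟨ih1, ih2⟩ := ih hn
      have hmono : t n ≤ t (n+1) := (htmono n (n+1) (by omega) hk).le
      have hstep := piece_int (n+1) (by omega) (by omega) (t n) (t (n+1))
        (by simp) hmono (fun _ => le_rfl)
      refine ⟨ih1.trans hstep.1, ?_⟩
      rw [← intervalIntegral.integral_add_adjacent_intervals ih1 hstep.1, ih2, hstep.2,
        hS (n+1), Finset.sum_Icc_succ_top (by omega : 1 ≤ n+1), ← hS n]
      simp
  have Rx : ∀ j, 1 ≤ j → j ≤ K → ∀ x, t (j-1) ≤ x → (j ≤ K - 1 → x ≤ t j) →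
      (∫ u in (0:ℝ)..x, 1/η u) = S (j-1) + (x - t (j-1))/N j := by
    intro j hj1 hjK x hx hx2
    obtain ⟨h01, h02⟩ := Rt (j-1) (by omega)
    have hstep := piece_int j hj1 hjK (t (j-1)) x le_rfl hx hx2
    rw [← intervalIntegral.integral_add_adjacent_intervals h01 hstep.1, h02, hstep.2]
  have main : ∀ d k, 1 ≤ k → k + d = K →
      IntegrableOn (fun x => x * (a / η x) *
        Real.exp (-(a * ∫ u in (0:ℝ)..x, 1 / η u))) (Set.Ioi (t (k-1))) volume ∧
      ∫ x in Set.Ioi (t (k-1)), x * (a / η x) *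
          Real.exp (-(a * ∫ u in (0:ℝ)..x, 1 / η u)) =
        t (k-1) * Real.exp (-(a * S (k-1))) +
          (1/a) * ((∑ j ∈ Finset.Ico k K,
              N j * (Real.exp (-(a * S (j-1))) - Real.exp (-(a * S j)))) +
            N K * Real.exp (-(a * S (K-1)))) := by
    intro d
    induction d with
    | zero =>
      intro k hk1 hkK
      have hkK' : k = K := by omega
      subst hkK'
      have hp : 0 ≤ t (k-1) := ht_nonneg (k-1) le_rfl
      have hNK := hN k hk1 le_rfl
      have hEq : Set.EqOn
          (fun x => x * (a / η x) * Real.exp (-(a * ∫ u in (0:ℝ)..x, 1 / η u)))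
          (fun x => x * (a / N k) * Real.exp (-(a * (S (k-1) + (x - t (k-1)) / N k))))
          (Set.Ioi (t (k-1))) := by
        intro x hx
        have hx' : t (k-1) ≤ x := le_of_lt hx
        simp only
        rw [hηlast x hx', Rx k hk1 le_rfl x hx' (fun h => absurd h (by omega))]
      obtain ⟨hint, hval⟩ := coal_piece_inf a (N k) (t (k-1)) (S (k-1)) ha' hNK hp
      constructor
      · exact hint.congr_fun hEq.symm measurableSet_Ioi
      · rw [setIntegral_congr_fun measurableSet_Ioi hEq, hval,
          Finset.Ico_self, Finset.sum_empty]
        field_simp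
        ring
    | succ d ih =>
      intro k hk1 hkK
      have hkK1 : k ≤ K - 1 := by omega
      obtain ⟨ih1, ih2⟩ := ih (k+1) (by omega) (by omega)
      simp only [Nat.add_sub_cancel] at ih1 ih2
      have htk : t (k-1) < t k := htmono (k-1) k (by omega) hkK1
      have hNk := hN k hk1 (by omega)
      have hEq : ∀ᵐ x ∂volume, x ∈ Set.Ioc (t (k-1)) (t k) →
          x * (a / η x) * Real.exp (-(a * ∫ u in (0:ℝ)..x, 1 / η u)) =
          x * (a / N k) * Real.exp (-(a * (S (k-1) + (x - t (k-1)) / N k))) := by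
        rw [ae_iff]
        refine measure_mono_null ?_ (Real.volume_singleton (a := t k))
        intro x hx
        simp only [Set.mem_setOf_eq, Classical.not_imp] at hx
        obtain ⟨hx1, hx2⟩ := hx
        by_contra hne
        apply hx2
        have hxlt : x < t k := lt_of_le_of_ne hx1.2 (by simpa using hne)
        rw [hη k hk1 hkK1 x hx1.1.le hxlt,
          Rx k hk1 (by omega) x hx1.1.le (fun _ => hx1.2)]
      have hgint : IntegrableOn (fun x => x * (a / N k) *
          Real.exp (-(a * (S (k-1) + (x - t (k-1)) / N k))))
          (Set.Ioc (t (k-1)) (t k)) volume := by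
        apply Continuous.integrableOn_Ioc
        fun_prop
      have hfint : IntegrableOn (fun x => x * (a / η x) *
          Real.exp (-(a * ∫ u in (0:ℝ)..x, 1 / η u)))
          (Set.Ioc (t (k-1)) (t k)) volume :=
        hgint.congr ((ae_restrict_iff' measurableSet_Ioc).2
          (hEq.mono fun x h hx => (h hx).symm))
      have hIocval : ∫ x in Set.Ioc (t (k-1)) (t k),
          x * (a / η x) * Real.exp (-(a * ∫ u in (0:ℝ)..x, 1 / η u)) =
          (t (k-1) + N k / a) * Real.exp (-(a * S (k-1))) -
            (t k + N k / a) * Real.exp (-(a * (S (k-1) + (t k - t (k-1)) / N k))) := by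
        rw [setIntegral_congr_ae measurableSet_Ioc hEq,
          ← intervalIntegral.integral_of_le htk.le,
          coal_piece_fin a (N k) (t (k-1)) (S (k-1)) (t k) ha' hNk]
      have hSk : S k = S (k-1) + (t k - t (k-1)) / N k := by
        obtain ⟨n, rfl⟩ : ∃ n, k = n + 1 := ⟨k-1, by omega⟩
        rw [hS (n+1), Finset.sum_Icc_succ_top (by omega : 1 ≤ n+1), ← hS n]
        simp
      have hunion : Set.Ioc (t (k-1)) (t k) ∪ Set.Ioi (t k) = Set.Ioi (t (k-1)) :=
        Set.Ioc_union_Ioi_eq_Ioi htk.le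
      constructor
      · rw [← hunion]; exact hfint.union ih1
      · rw [← hunion, setIntegral_union (Set.Ioc_disjoint_Ioi le_rfl)
          measurableSet_Ioi hfint ih1, hIocval, ih2, ← hSk,
          Finset.sum_eq_sum_Ico_succ_bot (by omega : k < K)]
        field_simp
        ring
  obtain ⟨_, hmain⟩ := main (K-1) 1 le_rfl (by omega)
  simp only [Nat.sub_self] at hmain
  rw [ht0] at hmain
  have hS0 : S 0 = 0 := by
    rw [hS, Finset.Icc_eq_empty (by omega), Finset.sum_empty]
  rw [hmain, hS0]
  have hIco : Finset.Ico 1 K = Finset.Icc 1 (K-1) := by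
    rw [← Finset.Ico_add_one_right_eq_Icc]
    congr 1
    omega
  rw [hIco]
  ring
end

section
/- Fix τ > 0 and let ε: (1,∞) → (0,∞) be a function of s such that limsup_{s→∞} max{(ε(s)/s)·e^{τ/ε(s)}, ε(s)} < ∞. Then for every p > 0, ε(s)·s^p → ∞ as s → ∞. -/
open Filter

lemma log_le_half_self (x : ℝ) (hx : 0 < x) : Real.log x ≤ x / 2 := by
  have hs : Real.log x = 2 * Real.log (Real.sqrt x) := by
    rw [Real.log_sqrt hx.le]; ring
  have h1 : Real.log (Real.sqrt x) ≤ Real.sqrt x - 1 :=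
    Real.log_le_sub_one_of_pos (Real.sqrt_pos.mpr hx)
  have hsq : Real.sqrt x ^ 2 = x := Real.sq_sqrt hx.le
  nlinarith [sq_nonneg (Real.sqrt x - 2)]

/-- If both `ε(s)` and `(ε(s)/s) e^{τ/ε(s)}` remain bounded as `s → ∞`, then
`ε(s) s^p → ∞` for every `p > 0`. -/
theorem eps_poly_divergence (τ : ℝ) (hτ : 0 < τ)
    (ε : ℝ → ℝ) (hεpos : ∀ s, 1 < s → 0 < ε s)
    (hbdd : ∃ C : ℝ, ∀ᶠ s in atTop,
      max ((ε s / s) * Real.exp (τ / ε s)) (ε s) ≤ C) :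
    ∀ p : ℝ, 0 < p → Tendsto (fun s => ε s * s ^ p) atTop atTop := by
  obtain ⟨C, hC⟩ := hbdd
  intro p hp
  set D := max C 1 with hDdef
  have hD1 : (1:ℝ) ≤ D := le_max_right _ _
  have hD0 : (0:ℝ) < D := lt_of_lt_of_le one_pos hD1
  have hp2 : 0 < p / 2 := half_pos hp
  -- eventual lower bound on ε
  have key : ∀ᶠ s in atTop,
      0 < Real.log (D * s / τ) ∧ τ / (2 * Real.log (D * s / τ)) ≤ ε s := by
    filter_upwards [hC, eventually_gt_atTop 1] with s hCs hs1
    have hεs := hεpos s hs1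
    have hs0 : (0:ℝ) < s := lt_trans one_pos hs1
    have h1 : (ε s / s) * Real.exp (τ / ε s) ≤ D :=
      le_trans (le_trans (le_max_left _ _) hCs) (le_max_left C 1)
    set x := τ / ε s with hxdef
    have hx0 : 0 < x := div_pos hτ hεs
    have h2 : ε s * Real.exp x ≤ D * s := by
      rw [div_mul_eq_mul_div, div_le_iff₀ hs0] at h1
      linarith
    have h3 : Real.exp x ≤ D * s / ε s :=
      (le_div_iff₀ hεs).mpr (by linarith [h2, mul_comm (Real.exp x) (ε s)])
    have hds : D * s / ε s = (D * s / τ) * x := by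
      rw [hxdef]; field_simp
    have h4 : x ≤ Real.log (D * s / τ) + Real.log x := by
      have h5 : x ≤ Real.log (D * s / ε s) :=
        (Real.le_log_iff_exp_le (by positivity)).mpr h3
      rwa [hds, Real.log_mul (by positivity) (ne_of_gt hx0)] at h5
    have h6 : x / 2 ≤ Real.log (D * s / τ) := by
      have := log_le_half_self x hx0
      linarith
    have hL0 : 0 < Real.log (D * s / τ) := lt_of_lt_of_le (by positivity) h6
    refine ⟨hL0, ?_⟩
    rw [div_le_iff₀ (by positivity)]
    have hx2 : τ ≤ ε s * (2 * Real.log (D * s / τ)) := by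
      have : x ≤ 2 * Real.log (D * s / τ) := by linarith
      rw [hxdef, div_le_iff₀ hεs] at this
      linarith [this, mul_comm (2 * Real.log (D * s / τ)) (ε s)]
    linarith
  -- log (D s / τ) ≤ s^(p/2) eventually
  have hlog : ∀ᶠ s in atTop, Real.log (D * s / τ) ≤ s ^ (p/2) := by
    have hlit := (isLittleO_log_rpow_atTop hp2).bound (by norm_num : (0:ℝ) < 1/2)
    have htnd := (tendsto_rpow_atTop hp2).eventually_ge_atTop (2 * Real.log (D / τ))
    filter_upwards [hlit, htnd, eventually_ge_atTop (1:ℝ)] with s h1 h2 hs1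
    have hs0 : (0:ℝ) < s := lt_of_lt_of_le one_pos hs1
    have hrw : D * s / τ = (D / τ) * s := by ring
    rw [hrw, Real.log_mul (ne_of_gt (div_pos hD0 hτ)) (ne_of_gt hs0)]
    have hls : Real.log s ≤ 1/2 * s ^ (p/2) := by
      have hlogs : 0 ≤ Real.log s := Real.log_nonneg hs1
      have hr : 0 ≤ s ^ (p/2) := Real.rpow_nonneg hs0.le _
      calc Real.log s = ‖Real.log s‖ := by rw [Real.norm_eq_abs, abs_of_nonneg hlogs]
        _ ≤ 1/2 * ‖s ^ (p/2)‖ := h1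
        _ = 1/2 * s ^ (p/2) := by rw [Real.norm_eq_abs, abs_of_nonneg hr]
    linarith
  -- conclude
  refine tendsto_atTop_mono' atTop ?_
    ((tendsto_rpow_atTop hp2).const_mul_atTop (by positivity : (0:ℝ) < τ / 2))
  filter_upwards [key, hlog, eventually_gt_atTop 1] with s ⟨hL0, hεlow⟩ hls hs1
  have hs0 : (0:ℝ) < s := lt_trans one_pos hs1
  set L := Real.log (D * s / τ) with hLdef
  set A := s ^ (p/2) with hAdef
  have hA0 : 0 < A := Real.rpow_pos_of_pos hs0 _
  have hsp : s ^ p = A * A := by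
    rw [hAdef, ← Real.rpow_add hs0]; ring_nf
  have step1 : τ / 2 * A ≤ τ / (2 * L) * (A * A) := by
    rw [div_mul_eq_mul_div, div_mul_eq_mul_div, div_le_div_iff₀ two_pos (by positivity)]
    nlinarith [mul_nonneg (mul_nonneg hτ.le hA0.le) (sub_nonneg.mpr hls)]
  have step2 : τ / (2 * L) * s ^ p ≤ ε s * s ^ p :=
    mul_le_mul_of_nonneg_right hεlow (Real.rpow_nonneg hs0.le _)
  calc τ / 2 * A ≤ τ / (2 * L) * (A * A) := step1
    _ = τ / (2 * L) * s ^ p := by rw [hsp]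
    _ ≤ ε s * s ^ p := step2
end

section
/- Fix τ > 0 and suppose ε: (1,∞) → (0,∞) satisfies limsup_{s→∞} max{(ε(s)/s)·e^{τ/ε(s)}, ε(s)} < ∞ and liminf_{s→∞} ε(s)·(log s)/τ = q with 0 < q < 1. Then limsup_{s→∞} (ε(s)/s)·e^{τ/ε(s)} = ∞, a contradiction; hence liminf_{s→∞} ε(s)·(log s)/τ ≥ 1, i.e., ε(s) ≥ τ/log s for all sufficiently large s along the liminf. -/
open Filter

/-- If both `ε(s)` and `(ε(s)/s) e^{τ/ε(s)}` remain bounded as `s → ∞`, then it is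
impossible that `liminf_{s→∞} ε(s) (log s) / τ = q` for some `0 < q < 1`
(for such `q` one would get `limsup (ε(s)/s) e^{τ/ε(s)} = ∞`, a contradiction). -/
theorem eps_liminf_contradiction (τ : ℝ) (hτ : 0 < τ)
    (ε : ℝ → ℝ) (hεpos : ∀ s, 1 < s → 0 < ε s)
    (hbdd : ∃ C : ℝ, ∀ᶠ s in atTop,
      max ((ε s / s) * Real.exp (τ / ε s)) (ε s) ≤ C)
    (q : ℝ) (hq0 : 0 < q) (hq1 : q < 1)
    (hliminf : Filter.liminf (fun s => ε s * Real.log s / τ) atTop = q) :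
    False := by
  obtain ⟨C, hC⟩ := hbdd
  set q' : ℝ := (1 + q) / 2 with hq'def
  have hq'0 : 0 < q' := by rw [hq'def]; linarith
  have hq'1 : q' < 1 := by rw [hq'def]; linarith
  set δ : ℝ := 1 / q' - 1 with hδdef
  have hδ0 : 0 < δ := by
    have h1 : 1 < 1 / q' := by rw [lt_div_iff₀ hq'0]; linarith
    rw [hδdef]; linarith
  -- Step 1: eventual lower bound ε s ≥ τ / (3 log s)
  have hlow : ∀ᶠ s in atTop, τ / (3 * Real.log s) ≤ ε s := by
    have h1 : ∀ᶠ s : ℝ in atTop, C < τ * s / 3 := by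
      have ht : Tendsto (fun s : ℝ => τ * s / 3) atTop atTop := by
        apply Tendsto.atTop_div_const (by norm_num)
        exact Tendsto.const_mul_atTop hτ tendsto_id
      exact ht.eventually_gt_atTop C
    filter_upwards [hC, h1, eventually_gt_atTop 1] with s hCs hs1 hs
    by_contra hlt
    push_neg at hlt
    have hlog : 0 < Real.log s := Real.log_pos hs
    have hε := hεpos s hs
    have hspos : (0:ℝ) < s := by linarith
    have h3 : Real.log s ≤ τ / (3 * ε s) := by
      rw [le_div_iff₀ (by positivity)]
      have := (lt_div_iff₀ (by positivity : (0:ℝ) < 3 * Real.log s)).mp hlt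
      nlinarith
    have hexp : Real.exp (τ / ε s) = Real.exp (τ / (3 * ε s)) * Real.exp (2 * τ / (3 * ε s)) := by
      rw [← Real.exp_add]
      congr 1
      field_simp
      ring
    have h4 : τ / (3 * ε s) ≤ Real.exp (τ / (3 * ε s)) := by
      have := Real.add_one_le_exp (τ / (3 * ε s)); linarith
    have h5 : s ^ 2 ≤ Real.exp (2 * τ / (3 * ε s)) := by
      have hle : 2 * Real.log s ≤ 2 * τ / (3 * ε s) := by
        rw [le_div_iff₀ (by positivity)]
        have := (le_div_iff₀ (by positivity : (0:ℝ) < 3 * ε s)).mp h3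
        nlinarith
      calc s ^ 2 = Real.exp (2 * Real.log s) := by
            rw [show (2:ℝ) * Real.log s = Real.log (s ^ 2) by
              rw [Real.log_pow]; norm_num, Real.exp_log (by positivity)]
        _ ≤ Real.exp (2 * τ / (3 * ε s)) := Real.exp_le_exp.mpr hle
    have h6 : τ * s / 3 ≤ (ε s / s) * Real.exp (τ / ε s) := by
      rw [hexp]
      have h7 : (τ / (3 * ε s)) * s ^ 2 ≤ Real.exp (τ / (3 * ε s)) * Real.exp (2 * τ / (3 * ε s)) :=
        mul_le_mul h4 h5 (by positivity) (Real.exp_pos _).le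
      calc τ * s / 3 = (ε s / s) * ((τ / (3 * ε s)) * s ^ 2) := by
            field_simp
        _ ≤ (ε s / s) * (Real.exp (τ / (3 * ε s)) * Real.exp (2 * τ / (3 * ε s))) := by
            exact mul_le_mul_of_nonneg_left h7 (by positivity)
    have := le_trans (le_max_left _ _) hCs
    linarith
  -- Step 2: frequently ε s * log s / τ < q'
  have hfreq : ∃ᶠ s in atTop, ε s * Real.log s / τ < q' := by
    apply frequently_lt_of_liminf_lt
    · by_cases hbd : BddAbove {a : ℝ | ∀ᶠ x in atTop, a ≤ ε x * Real.log x / τ}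
      · obtain ⟨b, hb⟩ := hbd
        exact ⟨b, fun a ha => hb (by rwa [eventually_map] at ha)⟩
      · exfalso
        rw [liminf_eq, Real.sSup_of_not_bddAbove hbd] at hliminf
        linarith
    · rw [hliminf, hq'def]; linarith
  -- Step 3: eventual facts
  have hev1 : ∀ᶠ s : ℝ in atTop, Real.log s ≤ s ^ (δ / 2) := by
    have h := (isLittleO_log_rpow_atTop (by positivity : 0 < δ / 2)).def one_pos
    filter_upwards [h, eventually_gt_atTop 1] with s hs hs1
    have hspos : (0:ℝ) < s := by linarith
    have hlog : 0 ≤ Real.log s := (Real.log_pos hs1).le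
    rw [Real.norm_eq_abs, Real.norm_eq_abs, abs_of_nonneg hlog,
      abs_of_nonneg (Real.rpow_nonneg hspos.le _), one_mul] at hs
    exact hs
  have hev2 : ∀ᶠ s : ℝ in atTop, C < τ / 3 * s ^ (δ / 2) := by
    have ht : Tendsto (fun s : ℝ => τ / 3 * s ^ (δ / 2)) atTop atTop :=
      Tendsto.const_mul_atTop (by positivity) (tendsto_rpow_atTop (by positivity))
    exact ht.eventually_gt_atTop C
  obtain ⟨s, hfq, hs1, hεlow, hCs, hlogle, hC2⟩ :=
    (hfreq.and_eventually ((eventually_gt_atTop 1).and (hlow.and (hC.and (hev1.and hev2))))).exists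
  have hspos : (0:ℝ) < s := by linarith
  have hlog : 0 < Real.log s := Real.log_pos hs1
  have hε := hεpos s hs1
  -- exp(τ/ε s) ≥ s^(1/q')
  have hexp : s ^ (1 / q') ≤ Real.exp (τ / ε s) := by
    have h1 : Real.log s * (1 / q') ≤ τ / ε s := by
      have h0 : ε s * Real.log s ≤ q' * τ := ((div_lt_iff₀ hτ).mp hfq).le
      rw [mul_one_div, div_le_div_iff₀ hq'0 hε]
      nlinarith
    calc s ^ (1 / q') = Real.exp (Real.log s * (1 / q')) := by
          rw [Real.rpow_def_of_pos hspos]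
      _ ≤ Real.exp (τ / ε s) := Real.exp_le_exp.mpr h1
  have key1 : τ / 3 * s ^ (δ / 2) ≤ τ / (3 * Real.log s) * s ^ δ := by
    have hsum : s ^ δ = s ^ (δ / 2) * s ^ (δ / 2) := by
      rw [← Real.rpow_add hspos]; ring_nf
    rw [div_mul_eq_mul_div, div_mul_eq_mul_div, div_le_div_iff₀ (by norm_num) (by positivity)]
    have : s ^ (δ / 2) * Real.log s ≤ s ^ (δ / 2) * s ^ (δ / 2) :=
      mul_le_mul_of_nonneg_left hlogle (Real.rpow_nonneg hspos.le _)
    nlinarith [Real.rpow_nonneg hspos.le (δ / 2), hτ.le]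
  have key2 : τ / (3 * Real.log s) * s ^ δ ≤ ε s * s ^ δ :=
    mul_le_mul_of_nonneg_right hεlow (Real.rpow_nonneg hspos.le _)
  have key3 : ε s * s ^ δ = (ε s / s) * s ^ (1 / q') := by
    rw [hδdef, Real.rpow_sub hspos, Real.rpow_one]
    field_simp
  have key4 : (ε s / s) * s ^ (1 / q') ≤ (ε s / s) * Real.exp (τ / ε s) :=
    mul_le_mul_of_nonneg_left hexp (by positivity)
  have key5 : (ε s / s) * Real.exp (τ / ε s) ≤ C := le_trans (le_max_left _ _) hCs
  linarith [key1, key2, key3 ▸ key4, key5, hC2]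
end

section
/- Let η, η′ be two piecewise-constant members of the family F_{I,J}: they agree on [0, t_I), on [t_I, ∞) they are non-decreasing step functions taking values in {h + kδ : 0 ≤ k ≤ J} with jumps of size δ only at the change points t_I < t_{I+1} < … < t_{I+J−1}, where h > 0, δ > 0, and the common minimum value over all t is ε = min_t η(t) = min_t η′(t) ≤ h. If η ≤ η′ pointwise on [t_I, ∞), then for every m ≥ 2, c_m^{(η′)} − c_m^{(η)} ≤ J·(δ/a_m)·e^{−a_m·τ_B/ε}, where τ_B = t_I − t_{I−1} and a_m = C(m,2). -/
set_option maxHeartbeats 1000000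


open MeasureTheory

/-- Expected waiting time to the first coalescence in a sample with pairwise rate `a`
under population size function `η`. -/
noncomputable def firstCoalTime (η : ℝ → ℝ) (a : ℝ) : ℝ :=
  ∫ x in Set.Ioi (0 : ℝ), x * (a / η x) * Real.exp (-(a * ∫ u in (0:ℝ)..x, 1 / η u))

section AuxiliaryLemmas

open Set Filter

lemma bddIntegrableOn {f : ℝ → ℝ} {s : Set ℝ}
    (hm : AEStronglyMeasurable f (volume.restrict s)) (hs : MeasurableSet s)
    (hμ : volume s < ⊤) {C : ℝ} (hbd : ∀ x ∈ s, ‖f x‖ ≤ C) :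
    IntegrableOn f s := by
  have hconst : IntegrableOn (fun _ => C) s volume :=
    integrableOn_const hμ.ne
  exact hconst.mono' hm ((ae_restrict_iff' hs).mpr (Filter.Eventually.of_forall hbd))

lemma bddIntervalIntegrable {f : ℝ → ℝ} (hm : Measurable f) {C : ℝ}
    (hbd : ∀ x, ‖f x‖ ≤ C) (p q : ℝ) : IntervalIntegrable f volume p q := by
  constructor <;>
    exact bddIntegrableOn hm.aestronglyMeasurable.restrict measurableSet_Ioc
      measure_Ioc_lt_top (fun x _ => hbd x)

lemma mul_exp_bound {b u : ℝ} (hb : 0 < b) (hu : 0 ≤ u) :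
    u * Real.exp (-(b * u)) ≤ (2 / b) * Real.exp (-(b / 2) * u) := by
  have hb2 : 0 < b / 2 := by linarith
  have h1 : b / 2 * u ≤ Real.exp (b / 2 * u) :=
    le_trans (by linarith [Real.add_one_le_exp (b / 2 * u)]) (le_refl _)
  have h2 : u ≤ 2 / b * Real.exp (b / 2 * u) := by
    have h3 : 2 / b * (b / 2 * u) ≤ 2 / b * Real.exp (b / 2 * u) :=
      mul_le_mul_of_nonneg_left h1 (by positivity)
    have h4 : 2 / b * (b / 2 * u) = u := by field_simp
    linarith
  calc u * Real.exp (-(b * u)) ≤ (2 / b * Real.exp (b / 2 * u)) * Real.exp (-(b * u)) :=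
        mul_le_mul_of_nonneg_right h2 (Real.exp_pos _).le
    _ = 2 / b * Real.exp (b / 2 * u + -(b * u)) := by rw [mul_assoc, ← Real.exp_add]
    _ = (2 / b) * Real.exp (-(b / 2) * u) := by congr 1; ring

lemma tail_key (T a lo hi : ℝ) (hT : 0 ≤ T) (ha : 0 < a) (hlo : 0 < lo) (hlohi : lo ≤ hi)
    (N : ℝ → ℝ) (hNm : Measurable N) (hNlo : ∀ x, lo ≤ N x) (hNhi : ∀ x, N x ≤ hi)
    (hstep : ∀ x, T ≤ x → ∃ s, x < s ∧ ∀ y, x ≤ y → y < s → N y = N x) :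
    IntegrableOn (fun x => x * (a / N x) * Real.exp (-(a * ∫ u in T..x, 1 / N u)))
      (Set.Ioi T) ∧
    T + lo / a ≤ (∫ x in Set.Ioi T,
      x * (a / N x) * Real.exp (-(a * ∫ u in T..x, 1 / N u))) ∧
    (∫ x in Set.Ioi T, x * (a / N x) * Real.exp (-(a * ∫ u in T..x, 1 / N u)))
      ≤ T + hi / a := by
  have hhi : 0 < hi := hlo.trans_le hlohi
  have hNpos : ∀ x, 0 < N x := fun x => hlo.trans_le (hNlo x)
  set w : ℝ → ℝ := fun u => 1 / N u with hw
  have hwm : Measurable w := measurable_const.div hNm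
  have hwnn : ∀ u, 0 ≤ w u := fun u => (one_div_pos.mpr (hNpos u)).le
  have hwbd : ∀ u, ‖w u‖ ≤ 1 / lo := by
    intro u
    rw [Real.norm_eq_abs, abs_of_nonneg (hwnn u)]
    exact one_div_le_one_div_of_le hlo (hNlo u)
  have hwint : ∀ p q : ℝ, IntervalIntegrable w volume p q :=
    bddIntervalIntegrable hwm hwbd
  set H : ℝ → ℝ := fun x => ∫ u in T..x, w u with hH
  have hHcont : Continuous H := intervalIntegral.continuous_primitive hwint T
  have hH0 : H T = 0 := by simp [hH]
  have hHlb : ∀ x, T ≤ x → (x - T) / hi ≤ H x := by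
    intro x hx
    have hc : ∀ u ∈ Icc T x, (fun _ => 1 / hi) u ≤ w u := by
      intro u _
      exact one_div_le_one_div_of_le (hNpos u) (hNhi u)
    have := intervalIntegral.integral_mono_on hx
      (intervalIntegrable_const) (hwint T x) hc
    simpa [smul_eq_mul, div_eq_mul_inv, mul_comm] using this
  have hHnn : ∀ x, T ≤ x → 0 ≤ H x := by
    intro x hx
    have := hHlb x hx
    linarith [div_nonneg (sub_nonneg.mpr hx) hhi.le]
  -- right derivative of H
  have hHderiv : ∀ x, T ≤ x → HasDerivWithinAt H (w x) (Set.Ioi x) x := by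
    intro x hx
    obtain ⟨s, hxs, hs⟩ := hstep x hx
    have haff : HasDerivWithinAt (fun y => H x + w x * (y - x)) (w x) (Set.Ioi x) x := by
      have h1 : HasDerivAt (fun y : ℝ => H x + w x * (y - x)) (w x) x := by
        simpa using (((hasDerivAt_id x).sub_const x).const_mul (w x)).const_add (H x)
      exact h1.hasDerivWithinAt
    refine haff.congr_of_eventuallyEq ?_ (by simp)
    have hmem : Set.Iio s ∈ nhdsWithin x (Set.Ioi x) :=
      nhdsWithin_le_nhds (Iio_mem_nhds hxs)
    have hmem2 : Set.Ioi x ∈ nhdsWithin x (Set.Ioi x) := self_mem_nhdsWithin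
    filter_upwards [hmem, hmem2] with y hy1 hy2
    have hxy : x ≤ y := le_of_lt hy2
    have hsplit : H x + ∫ u in x..y, w u = H y :=
      intervalIntegral.integral_add_adjacent_intervals (hwint T x) (hwint x y)
    have hconst : ∫ u in x..y, w u = w x * (y - x) := by
      have hcongr : ∫ u in x..y, w u = ∫ u in x..y, w x := by
        apply intervalIntegral.integral_congr
        intro u hu
        rw [Set.uIcc_of_le hxy] at hu
        have h1 : N u = N x := hs u hu.1 (lt_of_le_of_lt hu.2 hy1)
        simp [hw, h1]
      rw [hcongr, intervalIntegral.integral_const, smul_eq_mul, mul_comm]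
    rw [← hsplit, hconst]
  set S : ℝ → ℝ := fun x => Real.exp (-(a * H x)) with hS
  have hScont : Continuous S := Real.continuous_exp.comp (continuous_const.mul hHcont).neg
  have hSpos : ∀ x, 0 < S x := fun x => Real.exp_pos _
  have hSderiv : ∀ x, T ≤ x →
      HasDerivWithinAt S (-(a * w x) * S x) (Set.Ioi x) x := by
    intro x hx
    have h1 : HasDerivWithinAt (fun y => -(a * H y)) (-(a * w x)) (Set.Ioi x) x :=
      ((hHderiv x hx).const_mul a).neg
    have := (Real.hasDerivAt_exp (-(a * H x))).comp_hasDerivWithinAt x h1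
    simpa [hS, mul_comm, Function.comp_def] using this
  set b : ℝ := a / hi with hb
  have hbpos : 0 < b := div_pos ha hhi
  have hSbd : ∀ x, T ≤ x → S x ≤ Real.exp (b * T) * Real.exp (-b * x) := by
    intro x hx
    have h1 : -(a * H x) ≤ -(a * ((x - T) / hi)) := by
      have := hHlb x hx
      nlinarith
    have h2 : -(a * ((x - T) / hi)) = b * T + -b * x := by
      rw [hb]
      ring
    calc S x ≤ Real.exp (-(a * ((x - T) / hi))) := Real.exp_le_exp.mpr h1
      _ = Real.exp (b * T) * Real.exp (-b * x) := by rw [← Real.exp_add, h2]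
  have hSle1 : ∀ x, T ≤ x → S x ≤ 1 := by
    intro x hx
    have := hHnn x hx
    have : -(a * H x) ≤ 0 := by nlinarith
    simpa [hS] using Real.exp_le_one_iff.mpr this
  set f : ℝ → ℝ := fun x => a / N x * S x with hf
  have hfm : Measurable f := (measurable_const.div hNm).mul hScont.measurable
  have hfnn : ∀ x, 0 ≤ f x := fun x =>
    mul_nonneg (div_nonneg ha.le (hNpos x).le) (hSpos x).le
  have hdivle : ∀ x, a / N x ≤ a / lo := by
    intro x
    rw [div_eq_mul_one_div a (N x), div_eq_mul_one_div a lo]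
    exact mul_le_mul_of_nonneg_left (one_div_le_one_div_of_le hlo (hNlo x)) ha.le
  have hfbd : ∀ x, T ≤ x → f x ≤ a / lo * Real.exp (b * T) * Real.exp (-b * x) := by
    intro x hx
    calc f x ≤ a / lo * (Real.exp (b * T) * Real.exp (-b * x)) :=
          mul_le_mul (hdivle x) (hSbd x hx) (hSpos x).le (by positivity)
      _ = a / lo * Real.exp (b * T) * Real.exp (-b * x) := by ring
  have hfint : IntegrableOn f (Set.Ioi T) := by
    have hdom : IntegrableOn (fun x => a / lo * Real.exp (b * T) * Real.exp (-b * x))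
        (Set.Ioi T) := (exp_neg_integrableOn_Ioi T hbpos).const_mul _
    apply hdom.mono' hfm.aestronglyMeasurable.restrict
    rw [ae_restrict_iff' measurableSet_Ioi]
    filter_upwards with x hx
    rw [Real.norm_eq_abs, abs_of_nonneg (hfnn x)]
    exact hfbd x (le_of_lt hx)
  have hSint : IntegrableOn S (Set.Ioi T) := by
    have hdom : IntegrableOn (fun x => Real.exp (b * T) * Real.exp (-b * x)) (Set.Ioi T) :=
      (exp_neg_integrableOn_Ioi T hbpos).const_mul _
    apply hdom.mono' hScont.measurable.aestronglyMeasurable.restrict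
    rw [ae_restrict_iff' measurableSet_Ioi]
    filter_upwards with x hx
    rw [Real.norm_eq_abs, abs_of_nonneg (hSpos x).le]
    exact hSbd x hx.le
  have hxSbd : ∀ x, T ≤ x →
      x * S x ≤ Real.exp (b * T) * ((2 / b) * Real.exp (-(b / 2) * x)) := by
    intro x hx
    have hx0 : 0 ≤ x := le_trans hT hx
    have h4 : x * Real.exp (-(b * x)) ≤ 2 / b * Real.exp (-(b / 2) * x) :=
      mul_exp_bound hbpos hx0
    calc x * S x ≤ x * (Real.exp (b * T) * Real.exp (-b * x)) :=
          mul_le_mul_of_nonneg_left (hSbd x hx) hx0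
      _ = Real.exp (b * T) * (x * Real.exp (-(b * x))) := by ring_nf
      _ ≤ Real.exp (b * T) * (2 / b * Real.exp (-(b / 2) * x)) :=
          mul_le_mul_of_nonneg_left h4 (Real.exp_pos _).le
  have hxfbd : ∀ x, T ≤ x →
      x * f x ≤ (a / lo * Real.exp (b * T) * (2 / b)) * Real.exp (-(b / 2) * x) := by
    intro x hx
    have hx0 : 0 ≤ x := le_trans hT hx
    have hfS : f x ≤ a / lo * S x :=
      mul_le_mul_of_nonneg_right (hdivle x) (hSpos x).le
    calc x * f x ≤ x * (a / lo * S x) := mul_le_mul_of_nonneg_left hfS hx0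
      _ = a / lo * (x * S x) := by ring
      _ ≤ a / lo * (Real.exp (b * T) * (2 / b * Real.exp (-(b / 2) * x))) :=
          mul_le_mul_of_nonneg_left (hxSbd x hx) (by positivity)
      _ = (a / lo * Real.exp (b * T) * (2 / b)) * Real.exp (-(b / 2) * x) := by ring
  have hxfm : Measurable fun x => x * f x := measurable_id.mul hfm
  have hxfint : IntegrableOn (fun x => x * f x) (Set.Ioi T) := by
    have hdom : IntegrableOn
        (fun x => (a / lo * Real.exp (b * T) * (2 / b)) * Real.exp (-(b / 2) * x))
        (Set.Ioi T) := (exp_neg_integrableOn_Ioi T (by positivity)).const_mul _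
    apply hdom.mono' hxfm.aestronglyMeasurable.restrict
    rw [ae_restrict_iff' measurableSet_Ioi]
    filter_upwards with x hx
    have hx0 : 0 ≤ x := le_trans hT hx.le
    rw [Real.norm_eq_abs, abs_of_nonneg (mul_nonneg hx0 (hfnn x))]
    exact hxfbd x hx.le
  have hST : S T = 1 := by simp [hS, hH0]
  have hfFTC : ∀ R, T ≤ R → ∫ x in T..R, f x = 1 - S R := by
    intro R hR
    have hderiv : ∀ x ∈ Set.Ioo T R,
        HasDerivWithinAt (fun y => -S y) (f x) (Set.Ioi x) x := by
      intro x hx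
      have h := (hSderiv x hx.1.le).neg
      refine h.congr_deriv ?_
      simp only [hf, hS, hw]
      ring
    have hfi : IntervalIntegrable f volume T R := by
      rw [intervalIntegrable_iff_integrableOn_Ioc_of_le hR]
      exact hfint.mono_set Set.Ioc_subset_Ioi_self
    have heq := intervalIntegral.integral_eq_sub_of_hasDeriv_right_of_le hR
      (hScont.neg.continuousOn) hderiv hfi
    rw [heq, Pi.neg_apply, Pi.neg_apply, hST]
    ring
  have hexplim : Tendsto (fun x : ℝ => Real.exp (-b * x)) atTop (nhds 0) := by
    have h1 : Tendsto (fun x : ℝ => b * x) atTop atTop :=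
      Tendsto.const_mul_atTop hbpos tendsto_id
    have h2 := Real.tendsto_exp_neg_atTop_nhds_zero.comp h1
    exact h2.congr fun x => by simp
  have hexplim2 : Tendsto (fun x : ℝ => Real.exp (-(b / 2) * x)) atTop (nhds 0) := by
    have h1 : Tendsto (fun x : ℝ => (b / 2) * x) atTop atTop :=
      Tendsto.const_mul_atTop (by positivity) tendsto_id
    have h2 := Real.tendsto_exp_neg_atTop_nhds_zero.comp h1
    exact h2.congr fun x => by simp
  have hSRlim : Tendsto S atTop (nhds 0) := by
    apply squeeze_zero' (Filter.Eventually.of_forall fun x => (hSpos x).le)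
    · filter_upwards [eventually_ge_atTop T] with x hx
      exact hSbd x hx
    · simpa using hexplim.const_mul (Real.exp (b * T))
  have hRSlim : Tendsto (fun R => R * S R) atTop (nhds 0) := by
    apply squeeze_zero'
    · filter_upwards [eventually_ge_atTop (0 : ℝ)] with x hx
      exact mul_nonneg hx (hSpos x).le
    · filter_upwards [eventually_ge_atTop T] with x hx
      exact hxSbd x hx
    · have := (hexplim2.const_mul (2 / b)).const_mul (Real.exp (b * T))
      simpa using this
  have hintf1 : (∫ x in Set.Ioi T, f x) = 1 := by
    have h1 := intervalIntegral_tendsto_integral_Ioi T hfint tendsto_id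
    have h2 : Tendsto (fun R => ∫ x in T..R, f x) atTop (nhds 1) := by
      have h3 : Tendsto (fun R => 1 - S R) atTop (nhds 1) := by
        simpa using tendsto_const_nhds.sub hSRlim
      apply h3.congr'
      filter_upwards [eventually_ge_atTop T] with R hR
      exact (hfFTC R hR).symm
    exact tendsto_nhds_unique h1 h2
  have hSii : ∀ p q : ℝ, IntervalIntegrable S volume p q := fun p q =>
    hScont.intervalIntegrable p q
  have hxfFTC : ∀ R, T ≤ R →
      ∫ x in T..R, x * f x = (T - R * S R) + ∫ x in T..R, S x := by
    intro R hR
    have hGcont : Continuous fun y => -(y * S y) + ∫ u in T..y, S u :=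
      ((continuous_id.mul hScont).neg).add (intervalIntegral.continuous_primitive hSii T)
    have hderiv : ∀ x ∈ Set.Ioo T R,
        HasDerivWithinAt (fun y => -(y * S y) + ∫ u in T..y, S u) (x * f x)
          (Set.Ioi x) x := by
      intro x hx
      have h1 : HasDerivWithinAt (fun y => y * S y)
          (1 * S x + x * (-(a * w x) * S x)) (Set.Ioi x) x :=
        ((hasDerivAt_id x).hasDerivWithinAt).mul (hSderiv x hx.1.le)
      have h2 : HasDerivAt (fun y => ∫ u in T..y, S u) (S x) x :=
        intervalIntegral.integral_hasDerivAt_right (hSii T x)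
          (hScont.stronglyMeasurableAtFilter _ _) hScont.continuousAt
      have h3 := (h1.neg).add h2.hasDerivWithinAt
      refine h3.congr_deriv ?_
      simp only [hf, hw]
      ring
    have hii : IntervalIntegrable (fun x => x * f x) volume T R := by
      rw [intervalIntegrable_iff_integrableOn_Ioc_of_le hR]
      exact hxfint.mono_set Set.Ioc_subset_Ioi_self
    have heq := intervalIntegral.integral_eq_sub_of_hasDeriv_right_of_le hR
      hGcont.continuousOn hderiv hii
    rw [heq]
    simp only [intervalIntegral.integral_same]
    rw [hST]
    ring
  have hA : (∫ x in Set.Ioi T, x * f x) = T + ∫ x in Set.Ioi T, S x := by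
    have h1 := intervalIntegral_tendsto_integral_Ioi T hxfint tendsto_id
    have h3 := intervalIntegral_tendsto_integral_Ioi T hSint tendsto_id
    have h4 : Tendsto (fun R => (T - R * S R) + ∫ x in T..R, S x) atTop
        (nhds ((T - 0) + ∫ x in Set.Ioi T, S x)) :=
      (tendsto_const_nhds.sub hRSlim).add h3
    rw [sub_zero] at h4
    have h2 : Tendsto (fun R => ∫ x in T..R, x * f x) atTop
        (nhds (T + ∫ x in Set.Ioi T, S x)) := by
      apply h4.congr'
      filter_upwards [eventually_ge_atTop T] with R hR
      exact (hxfFTC R hR).symm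
    exact tendsto_nhds_unique h1 h2
  have hSlb : lo / a ≤ ∫ x in Set.Ioi T, S x := by
    have h1 : ∀ x ∈ Set.Ioi T, lo / a * f x ≤ S x := by
      intro x _
      have hNx := hNpos x
      have he : lo / a * f x = lo / N x * S x := by
        simp only [hf]
        field_simp
      rw [he]
      have h2 : lo / N x ≤ 1 := (div_le_one hNx).mpr (hNlo x)
      nlinarith [hSpos x]
    have h2 := setIntegral_mono_on (hfint.const_mul (lo / a)) hSint measurableSet_Ioi h1
    rw [integral_const_mul, hintf1, mul_one] at h2
    exact h2
  have hSub : (∫ x in Set.Ioi T, S x) ≤ hi / a := by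
    have h1 : ∀ x ∈ Set.Ioi T, S x ≤ hi / a * f x := by
      intro x _
      have hNx := hNpos x
      have he : hi / a * f x = hi / N x * S x := by
        simp only [hf]
        field_simp
      rw [he]
      have h2 : 1 ≤ hi / N x := (one_le_div hNx).mpr (hNhi x)
      nlinarith [hSpos x]
    have h2 := setIntegral_mono_on hSint (hfint.const_mul (hi / a)) measurableSet_Ioi h1
    rw [integral_const_mul, hintf1, mul_one] at h2
    exact h2
  have hFeq : (fun x => x * (a / N x) * Real.exp (-(a * ∫ u in T..x, 1 / N u)))
      = fun x => x * f x := by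
    funext x
    simp only [hf, hS, hH, hw]
    ring
  refine ⟨?_, ?_, ?_⟩
  · rw [hFeq]; exact hxfint
  · rw [hFeq, hA]
    have := hSlb
    linarith
  · rw [hFeq, hA]
    have := hSub
    linarith

end AuxiliaryLemmas

open Set Filter

/-- Lemma 1 of the paper: for two members `η ≤ η'` of the family `F_{I,J}` of
piecewise-constant models — agreeing on `[0, t_I)`, with a bottleneck of size
`ε = min η = min η'` and duration `τ_B = t_I - t_{I-1}` as the `I`-th epoch, and on
`[t_I, ∞)` non-decreasing step functions with values in `{h + kδ : 0 ≤ k ≤ J}` jumping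
by `δ` only at the change points `t_I < t_{I+1} < … < t_{I+J-1}` — the expected first
coalescence times satisfy `c_m^{(η')} - c_m^{(η)} ≤ J (δ/a_m) e^{-a_m τ_B / ε}`. -/
theorem family_first_coal_diff_bound (I J : ℕ) (hI : 1 ≤ I) (hJ : 1 ≤ J)
    (t : ℕ → ℝ) (ht0 : t 0 = 0) (htmono : ∀ i j, i < j → j ≤ I + J - 1 → t i < t j)
    (h δ ε τB : ℝ) (hh : 0 < h) (hδ : 0 < δ) (hε : 0 < ε) (hεh : ε ≤ h)
    (hτB : τB = t I - t (I - 1))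
    (η η' : ℝ → ℝ)
    (hηpos : ∀ x, 0 ≤ x → 0 < η x) (hη'pos : ∀ x, 0 ≤ x → 0 < η' x)
    -- the two models agree before time t_I
    (hagree : ∀ x, 0 ≤ x → x < t I → η x = η' x)
    -- the bottleneck: minimal size ε, attained on the I-th epoch [t_{I-1}, t_I)
    (hmin : ∀ x, 0 ≤ x → ε ≤ η x)
    (hbot : ∀ x, t (I - 1) ≤ x → x < t I → η x = ε)
    -- step structure on [t_I, ∞): values h + k δ, non-decreasing jump counters k, k' ≤ J
    (k k' : ℕ → ℕ) (hkmono : Monotone k) (hk'mono : Monotone k')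
    (hkJ : ∀ j, k j ≤ J) (hk'J : ∀ j, k' j ≤ J)
    (hηstep : ∀ j : ℕ, j + 1 ≤ J - 1 → ∀ x, t (I + j) ≤ x → x < t (I + j + 1) →
      η x = h + (k j : ℝ) * δ)
    (hηlast : ∀ x, t (I + J - 1) ≤ x → η x = h + (k (J - 1) : ℝ) * δ)
    (hη'step : ∀ j : ℕ, j + 1 ≤ J - 1 → ∀ x, t (I + j) ≤ x → x < t (I + j + 1) →
      η' x = h + (k' j : ℝ) * δ)
    (hη'last : ∀ x, t (I + J - 1) ≤ x → η' x = h + (k' (J - 1) : ℝ) * δ)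
    -- η ≤ η' pointwise on [t_I, ∞)
    (hle : ∀ x, t I ≤ x → η x ≤ η' x)
    (m : ℕ) (hm : 2 ≤ m) (a : ℝ) (ha : a = m * (m - 1) / 2) :
    firstCoalTime η' a - firstCoalTime η a ≤
      J * (δ / a) * Real.exp (-(a * τB / ε)) := by
  classical
  have hm2 : (2:ℝ) ≤ (m:ℝ) := by exact_mod_cast hm
  have ha0 : 0 < a := by rw [ha]; nlinarith
  have hIJ : I ≤ I + J - 1 := by omega
  have hT0 : 0 < t I := by rw [← ht0]; exact htmono 0 I (by omega) hIJ
  set T := t I with hTdef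
  have hPle : t (I-1) < T := htmono (I-1) I (by omega) hIJ
  have hP0 : 0 ≤ t (I-1) := by
    by_cases hI1 : I = 1
    · simp [hI1, ht0]
    · have h0 : (0:ℕ) < I - 1 := by omega
      have := htmono 0 (I-1) h0 (by omega)
      rw [ht0] at this; linarith
  have hτB0 : 0 < τB := by rw [hτB]; linarith
  set hiv : ℝ := h + (J:ℝ) * δ with hhiv
  have hJnn : (0:ℝ) ≤ (J:ℝ) := Nat.cast_nonneg J
  have hhhiv : h ≤ hiv := by
    have : (0:ℝ) ≤ (J:ℝ) * δ := mul_nonneg hJnn hδ.le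
    linarith
  have hJeq : I + J - 1 = I + (J - 1) := by omega
  -- the index function
  set jdx : ℝ → ℕ := fun x =>
    Nat.findGreatest (fun j => t (I + j) ≤ x) (J - 1) with hjdxdef
  have hjdx_spec : ∀ x, T ≤ x → t (I + jdx x) ≤ x := by
    intro x hx
    simp only [hjdxdef]
    exact Nat.findGreatest_spec (P := fun j => t (I + j) ≤ x) (n := J - 1)
      (Nat.zero_le _) (show t (I+0) ≤ x by simpa using hx)
  have hjdx_le : ∀ x, jdx x ≤ J - 1 := by
    intro x
    simp only [hjdxdef]
    exact Nat.findGreatest_le (P := fun j => t (I + j) ≤ x) _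
  have hjdx_mono : Monotone jdx := by
    intro x y hxy
    simp only [hjdxdef]
    exact Nat.findGreatest_mono (P := fun j => t (I + j) ≤ x)
      (Q := fun j => t (I + j) ≤ y) (fun j hj => le_trans hj hxy) le_rfl
  have hjdx_greatest : ∀ x (kk : ℕ), jdx x < kk → kk ≤ J - 1 → ¬ t (I + kk) ≤ x := by
    intro x kk h1 h2
    simp only [hjdxdef] at h1
    exact Nat.findGreatest_is_greatest (P := fun j => t (I + j) ≤ x) h1 h2
  have hjdx_last : ∀ x, t (I + (J - 1)) ≤ x → jdx x = J - 1 := by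
    intro x hx
    refine le_antisymm (hjdx_le x) ?_
    simp only [hjdxdef]
    exact Nat.le_findGreatest (P := fun j => t (I + j) ≤ x) le_rfl hx
  have hjdx_lt : ∀ x, T ≤ x → ¬ t (I + (J - 1)) ≤ x → jdx x < J - 1 := by
    intro x hx hcase
    rcases lt_or_eq_of_le (hjdx_le x) with h1 | h1
    · exact h1
    · exfalso
      have h0 : 0 < J - 1 := by
        by_contra h0
        have h2 : J - 1 = 0 := by omega
        exact hcase (by rw [h2]; simpa using hx)
      have h1' := h1
      simp only [hjdxdef] at h1'
      exact hcase (Nat.findGreatest_of_ne_zero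
        (P := fun j => t (I + j) ≤ x) h1' (by omega))
  -- representation
  have hrep : ∀ (κ : ℕ → ℕ) (ζ : ℝ → ℝ),
      (∀ j : ℕ, j + 1 ≤ J - 1 → ∀ x, t (I + j) ≤ x → x < t (I + j + 1) →
        ζ x = h + (κ j : ℝ) * δ) →
      (∀ x, t (I + J - 1) ≤ x → ζ x = h + (κ (J - 1) : ℝ) * δ) →
      ∀ x, T ≤ x → ζ x = h + (κ (jdx x) : ℝ) * δ := by
    intro κ ζ hstepζ hlastζ x hx
    by_cases hcase : t (I + (J - 1)) ≤ x
    · rw [hjdx_last x hcase]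
      exact hlastζ x (by rwa [hJeq])
    · have hjlt : jdx x < J - 1 := hjdx_lt x hx hcase
      have hnp : ¬ t (I + (jdx x + 1)) ≤ x :=
        hjdx_greatest x (jdx x + 1) (by omega) (by omega)
      have h1 : x < t (I + jdx x + 1) := by
        rw [show I + jdx x + 1 = I + (jdx x + 1) by omega]
        exact lt_of_not_ge hnp
      exact hstepζ (jdx x) (by omega) x (hjdx_spec x hx) h1
  -- locally constant to the right
  have hjdx_loc : ∀ x, T ≤ x → ∃ s, x < s ∧ ∀ y, x ≤ y → y < s → jdx y = jdx x := by
    intro x hx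
    by_cases hcase : t (I + (J - 1)) ≤ x
    · refine ⟨x + 1, by linarith, fun y hy _ => ?_⟩
      rw [hjdx_last y (le_trans hcase hy), hjdx_last x hcase]
    · have hjlt : jdx x < J - 1 := hjdx_lt x hx hcase
      refine ⟨t (I + (jdx x + 1)),
        lt_of_not_ge (hjdx_greatest x (jdx x + 1) (by omega) (by omega)), ?_⟩
      intro y hy hys
      have hge : jdx x ≤ jdx y := hjdx_mono hy
      have hle2 : jdx y ≤ jdx x := by
        by_contra hlt
        push_neg at hlt
        have hP : t (I + jdx y) ≤ y := hjdx_spec y (le_trans hx hy)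
        have h2 : t (I + (jdx x + 1)) ≤ t (I + jdx y) := by
          rcases eq_or_lt_of_le (Nat.succ_le_of_lt hlt) with h3 | h3
          · have h4 : I + (jdx x + 1) = I + jdx y := by omega
            rw [h4]
          · exact le_of_lt (htmono _ _ (by omega) (by
              have := hjdx_le y; omega))
        linarith
      exact le_antisymm hle2 hge
  set N : ℝ → ℝ := fun x => h + (k (jdx x) : ℝ) * δ with hNdef
  set N' : ℝ → ℝ := fun x => h + (k' (jdx x) : ℝ) * δ with hN'def
  have hηN : ∀ x, T ≤ x → η x = N x := hrep k η hηstep hηlast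
  have hη'N : ∀ x, T ≤ x → η' x = N' x := hrep k' η' hη'step hη'last
  have hNmono : Monotone N := by
    intro x y hxy
    have h1 : k (jdx x) ≤ k (jdx y) := hkmono (hjdx_mono hxy)
    have h2 : (k (jdx x) : ℝ) ≤ (k (jdx y) : ℝ) := by exact_mod_cast h1
    simp only [hNdef]
    nlinarith
  have hN'mono : Monotone N' := by
    intro x y hxy
    have h1 : k' (jdx x) ≤ k' (jdx y) := hk'mono (hjdx_mono hxy)
    have h2 : (k' (jdx x) : ℝ) ≤ (k' (jdx y) : ℝ) := by exact_mod_cast h1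
    simp only [hN'def]
    nlinarith
  have hNm : Measurable N := hNmono.measurable
  have hN'm : Measurable N' := hN'mono.measurable
  have hNlo : ∀ x, h ≤ N x := by
    intro x
    have : (0:ℝ) ≤ (k (jdx x) : ℝ) * δ := mul_nonneg (Nat.cast_nonneg _) hδ.le
    simp only [hNdef]; linarith
  have hN'lo : ∀ x, h ≤ N' x := by
    intro x
    have : (0:ℝ) ≤ (k' (jdx x) : ℝ) * δ := mul_nonneg (Nat.cast_nonneg _) hδ.le
    simp only [hN'def]; linarith
  have hNhi : ∀ x, N x ≤ hiv := by
    intro x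
    have h1 : (k (jdx x) : ℝ) ≤ (J:ℝ) := by exact_mod_cast hkJ (jdx x)
    have := mul_le_mul_of_nonneg_right h1 hδ.le
    simp only [hNdef, hhiv]; linarith
  have hN'hi : ∀ x, N' x ≤ hiv := by
    intro x
    have h1 : (k' (jdx x) : ℝ) ≤ (J:ℝ) := by exact_mod_cast hk'J (jdx x)
    have := mul_le_mul_of_nonneg_right h1 hδ.le
    simp only [hN'def, hhiv]; linarith
  have hNstep : ∀ x, T ≤ x → ∃ s, x < s ∧ ∀ y, x ≤ y → y < s → N y = N x := by
    intro x hx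
    obtain ⟨s, hs1, hs2⟩ := hjdx_loc x hx
    exact ⟨s, hs1, fun y hy hys => by simp only [hNdef, hs2 y hy hys]⟩
  have hN'step : ∀ x, T ≤ x → ∃ s, x < s ∧ ∀ y, x ≤ y → y < s → N' y = N' x := by
    intro x hx
    obtain ⟨s, hs1, hs2⟩ := hjdx_loc x hx
    exact ⟨s, hs1, fun y hy hys => by simp only [hN'def, hs2 y hy hys]⟩
  have hRHSnn : 0 ≤ (J:ℝ) * (δ / a) * Real.exp (-(a * τB / ε)) :=
    mul_nonneg (mul_nonneg hJnn (div_nonneg hδ.le ha0.le)) (Real.exp_pos _).le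
  by_cases hInt : IntegrableOn (fun u => 1 / η u) (Set.Ioo 0 T)
  case neg =>
    -- non-integrable bottleneck region: both expected times are 0
    have key0 : ∀ ζ : ℝ → ℝ, (∀ u, 0 ≤ u → 0 < ζ u) → (∀ x, T ≤ x → ζ x ≤ hiv) →
        (∀ x, 0 < x → x < T → ζ x = η x) → firstCoalTime ζ a = 0 := by
      intro ζ hpos hub hag
      apply integral_undef
      intro hcon
      have hnone : ∀ x, T < x → (∫ u in (0:ℝ)..x, 1 / ζ u) = 0 := by
        intro x hx
        apply intervalIntegral.integral_undef
        intro hcon2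
        apply hInt
        have h2 := (intervalIntegrable_iff_integrableOn_Ioc_of_le
          (by linarith : (0:ℝ) ≤ x)).mp hcon2
        have h3 : IntegrableOn (fun u => 1 / ζ u) (Set.Ioo 0 T) :=
          h2.mono_set (fun u hu => ⟨hu.1, le_of_lt (hu.2.trans hx)⟩)
        exact IntegrableOn.congr_fun h3
          (fun u hu => by show (1:ℝ) / ζ u = 1 / η u; rw [hag u hu.1 hu.2]) measurableSet_Ioo
      set T' := max T 1 with hT'def
      have hT'pos : 0 < T' := lt_of_lt_of_le one_pos (le_max_right _ _)
      have hcon2 : IntegrableOn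
          (fun x => x * (a / ζ x) * Real.exp (-(a * ∫ u in (0:ℝ)..x, 1 / ζ u)))
          (Set.Ioi T') := IntegrableOn.mono_set hcon (fun u hu => lt_trans hT'pos hu)
      have hhiv0 : 0 < hiv := lt_of_lt_of_le hh hhhiv
      have hlin : IntegrableOn (fun x => a / hiv * x) (Set.Ioi T') := by
        apply hcon2.mono'
          ((continuous_const.mul continuous_id').aestronglyMeasurable)
        rw [ae_restrict_iff' measurableSet_Ioi]
        filter_upwards with x hx
        have hxT : T < x := lt_of_le_of_lt (le_max_left _ _) hx
        have hx1 : 1 < x := lt_of_le_of_lt (le_max_right _ _) hx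
        show ‖a / hiv * x‖ ≤ _
        rw [Real.norm_eq_abs, abs_of_nonneg
          (mul_nonneg (div_nonneg ha0.le hhiv0.le) (by linarith))]
        rw [hnone x hxT]
        have hζub : ζ x ≤ hiv := hub x hxT.le
        have hζpos : 0 < ζ x := hpos x (by linarith)
        have hstep1 : a / hiv ≤ a / ζ x := by
          rw [div_eq_mul_one_div a (ζ x), div_eq_mul_one_div a hiv]
          exact mul_le_mul_of_nonneg_left (one_div_le_one_div_of_le hζpos hζub) ha0.le
        calc a / hiv * x ≤ a / ζ x * x :=
              mul_le_mul_of_nonneg_right hstep1 (by linarith)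
          _ = x * (a / ζ x) * Real.exp (-(a * 0)) := by
              simp [mul_comm]
      have hconst : IntegrableOn (fun _ : ℝ => a / hiv) (Set.Ioi T') := by
        apply hlin.mono' aestronglyMeasurable_const
        rw [ae_restrict_iff' measurableSet_Ioi]
        filter_upwards with x hx
        have hx1 : 1 < x := lt_of_le_of_lt (le_max_right _ _) hx
        rw [Real.norm_eq_abs, abs_of_nonneg (div_nonneg ha0.le hhiv0.le)]
        calc a / hiv = a / hiv * 1 := by ring
          _ ≤ a / hiv * x :=
            mul_le_mul_of_nonneg_left (by linarith) (div_nonneg ha0.le hhiv0.le)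
      rw [integrableOn_const_iff] at hconst
      rcases hconst with h1 | h1
      · exact absurd (enorm_eq_zero.mp h1) (ne_of_gt (div_pos ha0 hhiv0))
      · rw [Real.volume_Ioi] at h1
        exact absurd h1 (by simp)
    have hz1 : firstCoalTime η a = 0 :=
      key0 η hηpos (fun x hx => (hηN x hx) ▸ hNhi x) (fun x _ _ => rfl)
    have hz2 : firstCoalTime η' a = 0 :=
      key0 η' hη'pos (fun x hx => (hη'N x hx) ▸ hN'hi x)
        (fun x hx1 hx2 => (hagree x hx1.le hx2).symm)
    rw [hz1, hz2, sub_zero]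
    exact hRHSnn
  case pos =>
    have hIntIoc : IntegrableOn (fun u => 1 / η u) (Set.Ioc 0 T) := by
      rwa [integrableOn_Ioc_iff_integrableOn_Ioo]
    have hii0T : IntervalIntegrable (fun u => 1 / η u) volume 0 T := by
      rw [intervalIntegrable_iff_integrableOn_Ioc_of_le hT0.le]; exact hIntIoc
    set C : ℝ := ∫ u in (0:ℝ)..T, 1 / η u with hCdef
    have hCge : τB / ε ≤ C := by
      set P := t (I-1) with hPdef
      have hiiP : IntervalIntegrable (fun u => 1 / η u) volume 0 P := by
        rw [intervalIntegrable_iff_integrableOn_Ioc_of_le hP0]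
        exact hIntIoc.mono_set (Set.Ioc_subset_Ioc le_rfl hPle.le)
      have hiiPT : IntervalIntegrable (fun u => 1 / η u) volume P T := by
        rw [intervalIntegrable_iff_integrableOn_Ioc_of_le hPle.le]
        exact hIntIoc.mono_set (Set.Ioc_subset_Ioc hP0 le_rfl)
      have hsplit : (∫ u in (0:ℝ)..P, 1/η u) + (∫ u in P..T, 1/η u) = C :=
        intervalIntegral.integral_add_adjacent_intervals hiiP hiiPT
      have h1 : 0 ≤ ∫ u in (0:ℝ)..P, 1/η u :=
        intervalIntegral.integral_nonneg hP0
          (fun u hu => one_div_nonneg.mpr (hηpos u hu.1).le)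
      have h2 : (∫ u in P..T, 1/η u) = τB / ε := by
        have hTne : ∀ᵐ u : ℝ, u ≠ T := by
          have h3 : volume ({T} : Set ℝ) = 0 := Real.volume_singleton
          rw [ae_iff]
          convert h3 using 2
          ext u
          simp
        have hcongr : (∫ u in P..T, 1/η u) = ∫ u in P..T, 1/ε := by
          apply intervalIntegral.integral_congr_ae
          filter_upwards [hTne] with u hu hmem
          rw [Set.uIoc_of_le hPle.le] at hmem
          have huT : u < T := lt_of_le_of_ne hmem.2 hu
          rw [hbot u hmem.1.le huT]
        rw [hcongr, intervalIntegral.integral_const, smul_eq_mul, mul_one_div, hτB]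
      linarith
    have hNint : ∀ x : ℝ, IntegrableOn (fun u => 1 / N u) (Set.Ioc T x) := by
      intro x
      apply bddIntegrableOn (measurable_const.div hNm).aestronglyMeasurable.restrict
        measurableSet_Ioc measure_Ioc_lt_top (C := 1/h)
      intro u _
      show ‖1 / N u‖ ≤ 1 / h
      rw [Real.norm_eq_abs, abs_of_nonneg
        (one_div_nonneg.mpr (lt_of_lt_of_le hh (hNlo u)).le)]
      exact one_div_le_one_div_of_le hh (hNlo u)
    have hN'int : ∀ x : ℝ, IntegrableOn (fun u => 1 / N' u) (Set.Ioc T x) := by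
      intro x
      apply bddIntegrableOn (measurable_const.div hN'm).aestronglyMeasurable.restrict
        measurableSet_Ioc measure_Ioc_lt_top (C := 1/h)
      intro u _
      show ‖1 / N' u‖ ≤ 1 / h
      rw [Real.norm_eq_abs, abs_of_nonneg
        (one_div_nonneg.mpr (lt_of_lt_of_le hh (hN'lo u)).le)]
      exact one_div_le_one_div_of_le hh (hN'lo u)
    have hiiTx : ∀ x, T ≤ x → IntervalIntegrable (fun u => 1 / η u) volume T x := by
      intro x hx
      rw [intervalIntegrable_iff_integrableOn_Ioc_of_le hx]
      exact IntegrableOn.congr_fun (hNint x)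
        (fun u hu => by show (1:ℝ) / N u = 1 / η u; rw [hηN u hu.1.le]) measurableSet_Ioc
    have hiiTx' : ∀ x, T ≤ x → IntervalIntegrable (fun u => 1 / η' u) volume T x := by
      intro x hx
      rw [intervalIntegrable_iff_integrableOn_Ioc_of_le hx]
      exact IntegrableOn.congr_fun (hN'int x)
        (fun u hu => by show (1:ℝ) / N' u = 1 / η' u; rw [hη'N u hu.1.le]) measurableSet_Ioc
    have hsplitΛ : ∀ x, T ≤ x →
        (∫ u in (0:ℝ)..x, 1/η u) = C + ∫ u in T..x, 1/N u := by
      intro x hx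
      rw [← intervalIntegral.integral_add_adjacent_intervals hii0T (hiiTx x hx)]
      congr 1
      apply intervalIntegral.integral_congr
      intro u hu
      rw [Set.uIcc_of_le hx] at hu
      show (1:ℝ) / η u = 1 / N u
      rw [hηN u hu.1]
    have hInt' : IntegrableOn (fun u => 1 / η' u) (Set.Ioo 0 T) :=
      IntegrableOn.congr_fun hInt
        (fun u hu => by show (1:ℝ) / η u = 1 / η' u; rw [hagree u hu.1.le hu.2])
        measurableSet_Ioo
    have hIntIoc' : IntegrableOn (fun u => 1 / η' u) (Set.Ioc 0 T) := by
      rwa [integrableOn_Ioc_iff_integrableOn_Ioo]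
    have hii0T' : IntervalIntegrable (fun u => 1 / η' u) volume 0 T := by
      rw [intervalIntegrable_iff_integrableOn_Ioc_of_le hT0.le]; exact hIntIoc'
    have hCC : (∫ u in (0:ℝ)..T, 1 / η' u) = C := by
      rw [hCdef]
      rw [intervalIntegral.integral_of_le hT0.le, intervalIntegral.integral_of_le hT0.le]
      rw [integral_Ioc_eq_integral_Ioo, integral_Ioc_eq_integral_Ioo]
      apply setIntegral_congr_fun measurableSet_Ioo
      intro u hu
      show (1:ℝ) / η' u = 1 / η u
      rw [hagree u hu.1.le hu.2]
    have hsplitΛ' : ∀ x, T ≤ x →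
        (∫ u in (0:ℝ)..x, 1/η' u) = C + ∫ u in T..x, 1/N' u := by
      intro x hx
      rw [← hCC, ← intervalIntegral.integral_add_adjacent_intervals hii0T' (hiiTx' x hx)]
      congr 1
      apply intervalIntegral.integral_congr
      intro u hu
      rw [Set.uIcc_of_le hx] at hu
      show (1:ℝ) / η' u = 1 / N' u
      rw [hη'N u hu.1]
    obtain ⟨hFint, hFlb, hFub⟩ :=
      tail_key T a h hiv hT0.le ha0 hh hhhiv N hNm hNlo hNhi hNstep
    obtain ⟨hF'int, hF'lb, hF'ub⟩ :=
      tail_key T a h hiv hT0.le ha0 hh hhhiv N' hN'm hN'lo hN'hi hN'step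
    set E : ℝ := Real.exp (-(a * C)) with hEdef
    have hE0 : 0 ≤ E := by rw [hEdef]; positivity
    set g : ℝ → ℝ :=
      fun x => x * (a / η x) * Real.exp (-(a * ∫ u in (0:ℝ)..x, 1 / η u)) with hgdef
    set g' : ℝ → ℝ :=
      fun x => x * (a / η' x) * Real.exp (-(a * ∫ u in (0:ℝ)..x, 1 / η' u)) with hg'def
    have hgN : ∀ x ∈ Set.Ioi T, g x =
        E * (x * (a / N x) * Real.exp (-(a * ∫ u in T..x, 1 / N u))) := by
      intro x hx
      simp only [hgdef]
      rw [hsplitΛ x (le_of_lt hx), hηN x (le_of_lt hx)]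
      rw [mul_add, neg_add, Real.exp_add, hEdef]
      ring
    have hg'N : ∀ x ∈ Set.Ioi T, g' x =
        E * (x * (a / N' x) * Real.exp (-(a * ∫ u in T..x, 1 / N' u))) := by
      intro x hx
      simp only [hg'def]
      rw [hsplitΛ' x (le_of_lt hx), hη'N x (le_of_lt hx)]
      rw [mul_add, neg_add, Real.exp_add, hEdef]
      ring
    have hgIoiInt : IntegrableOn g (Set.Ioi T) :=
      IntegrableOn.congr_fun (hFint.const_mul E)
        (fun x hx => (hgN x hx).symm) measurableSet_Ioi
    have hg'IoiInt : IntegrableOn g' (Set.Ioi T) :=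
      IntegrableOn.congr_fun (hF'int.const_mul E)
        (fun x hx => (hg'N x hx).symm) measurableSet_Ioi
    have hIocPart : ∀ ζ : ℝ → ℝ, (∀ u, 0 ≤ u → 0 < ζ u) →
        IntegrableOn (fun u => 1 / ζ u) (Set.Ioc 0 T) →
        IntegrableOn (fun x => x * (a / ζ x) *
          Real.exp (-(a * ∫ u in (0:ℝ)..x, 1 / ζ u))) (Set.Ioc 0 T) := by
      intro ζ hpos hζInt
      have hζii : ∀ x ∈ Set.Ioc (0:ℝ) T, IntervalIntegrable (fun u => 1/ζ u) volume 0 x := by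
        intro x hx
        rw [intervalIntegrable_iff_integrableOn_Ioc_of_le hx.1.le]
        exact hζInt.mono_set (Set.Ioc_subset_Ioc le_rfl hx.2)
      have hΛnn : ∀ x ∈ Set.Ioc (0:ℝ) T, 0 ≤ ∫ u in (0:ℝ)..x, 1/ζ u := fun x hx =>
        intervalIntegral.integral_nonneg hx.1.le
          (fun u hu => one_div_nonneg.mpr (hpos u hu.1).le)
      set wt : ℝ → ℝ := Set.indicator (Set.Ioc 0 T) (fun u => 1/ζ u) with hwt
      have hwtint : Integrable wt := hζInt.integrable_indicator measurableSet_Ioc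
      set Φ : ℝ → ℝ := fun x => ∫ u in (0:ℝ)..x, wt u with hΦ
      have hΦcont : Continuous Φ :=
        intervalIntegral.continuous_primitive (fun p q => hwtint.intervalIntegrable) 0
      have hΦeq : ∀ x ∈ Set.Ioc (0:ℝ) T, Φ x = ∫ u in (0:ℝ)..x, 1/ζ u := by
        intro x hx
        simp only [hΦ]
        rw [intervalIntegral.integral_of_le hx.1.le, intervalIntegral.integral_of_le hx.1.le]
        apply setIntegral_congr_fun measurableSet_Ioc
        intro u hu
        have hmem : u ∈ Set.Ioc (0:ℝ) T := Set.mem_Ioc.mpr ⟨hu.1, hu.2.trans hx.2⟩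
        show wt u = 1 / ζ u
        rw [hwt]
        exact Set.indicator_of_mem hmem _
      have haesm : AEStronglyMeasurable
          (fun x => x * (a / ζ x) * Real.exp (-(a * ∫ u in (0:ℝ)..x, 1 / ζ u)))
          (volume.restrict (Set.Ioc 0 T)) := by
        have h1 : AEStronglyMeasurable
            (fun x => x * (a * (1 / ζ x)) * Real.exp (-(a * Φ x)))
            (volume.restrict (Set.Ioc 0 T)) :=
          (aestronglyMeasurable_id.mul (hζInt.aestronglyMeasurable.const_mul a)).mul
            ((Real.continuous_exp.comp ((continuous_const.mul hΦcont).neg)).aestronglyMeasurable)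
        apply h1.congr
        filter_upwards [ae_restrict_mem measurableSet_Ioc] with x hx
        rw [hΦeq x hx, mul_one_div]
      have hbd : ∀ x ∈ Set.Ioc (0:ℝ) T,
          ‖x * (a / ζ x) * Real.exp (-(a * ∫ u in (0:ℝ)..x, 1 / ζ u))‖
            ≤ T * a * (1 / ζ x) := by
        intro x hx
        have hζx := hpos x hx.1.le
        have hΛ := hΛnn x hx
        have hexp1 : Real.exp (-(a * ∫ u in (0:ℝ)..x, 1 / ζ u)) ≤ 1 :=
          Real.exp_le_one_iff.mpr (by nlinarith)
        have hnn : 0 ≤ x * (a / ζ x) :=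
          mul_nonneg hx.1.le (div_nonneg ha0.le hζx.le)
        rw [Real.norm_eq_abs, abs_of_nonneg (mul_nonneg hnn (Real.exp_pos _).le)]
        have h2 : x * (a / ζ x) * Real.exp (-(a * ∫ u in (0:ℝ)..x, 1 / ζ u))
            ≤ x * (a / ζ x) := by
          nlinarith [hexp1, hnn, (Real.exp_pos (-(a * ∫ u in (0:ℝ)..x, 1 / ζ u))).le]
        have h3 : x * (a / ζ x) = x * a * (1 / ζ x) := by ring
        have h4 : x * a * (1 / ζ x) ≤ T * a * (1 / ζ x) := by
          apply mul_le_mul_of_nonneg_right _ (one_div_nonneg.mpr hζx.le)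
          exact mul_le_mul_of_nonneg_right hx.2 ha0.le
        linarith
      have hdom : IntegrableOn (fun x => T * a * (1/ζ x)) (Set.Ioc 0 T) :=
        hζInt.const_mul (T * a)
      exact hdom.mono' haesm
        ((ae_restrict_iff' measurableSet_Ioc).mpr (Filter.Eventually.of_forall hbd))
    have hgIocInt : IntegrableOn g (Set.Ioc 0 T) := hIocPart η hηpos hIntIoc
    have hg'IocInt : IntegrableOn g' (Set.Ioc 0 T) := hIocPart η' hη'pos hIntIoc'
    have hsplitg : firstCoalTime η a = (∫ x in Set.Ioc 0 T, g x) + ∫ x in Set.Ioi T, g x := by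
      rw [show firstCoalTime η a = ∫ x in Set.Ioi (0:ℝ), g x from rfl]
      rw [← Set.Ioc_union_Ioi_eq_Ioi hT0.le]
      exact setIntegral_union (Set.Ioc_disjoint_Ioi le_rfl) measurableSet_Ioi
        hgIocInt hgIoiInt
    have hsplitg' : firstCoalTime η' a
        = (∫ x in Set.Ioc 0 T, g' x) + ∫ x in Set.Ioi T, g' x := by
      rw [show firstCoalTime η' a = ∫ x in Set.Ioi (0:ℝ), g' x from rfl]
      rw [← Set.Ioc_union_Ioi_eq_Ioi hT0.le]
      exact setIntegral_union (Set.Ioc_disjoint_Ioi le_rfl) measurableSet_Ioi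
        hg'IocInt hg'IoiInt
    have hIocEq : (∫ x in Set.Ioc (0:ℝ) T, g' x) = ∫ x in Set.Ioc (0:ℝ) T, g x := by
      rw [integral_Ioc_eq_integral_Ioo, integral_Ioc_eq_integral_Ioo]
      apply setIntegral_congr_fun measurableSet_Ioo
      intro x hx
      simp only [hg'def, hgdef]
      have h2 : (∫ u in (0:ℝ)..x, 1/η' u) = ∫ u in (0:ℝ)..x, 1/η u := by
        apply intervalIntegral.integral_congr
        intro u hu
        rw [Set.uIcc_of_le hx.1.le] at hu
        show (1:ℝ) / η' u = 1 / η u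
        rw [hagree u hu.1 (lt_of_le_of_lt hu.2 hx.2)]
      rw [← hagree x hx.1.le hx.2, h2]
    have hIoiVal : (∫ x in Set.Ioi T, g x) = E * ∫ x in Set.Ioi T,
        x * (a / N x) * Real.exp (-(a * ∫ u in T..x, 1 / N u)) := by
      rw [setIntegral_congr_fun measurableSet_Ioi (fun x hx => hgN x hx)]
      exact integral_const_mul E _
    have hIoiVal' : (∫ x in Set.Ioi T, g' x) = E * ∫ x in Set.Ioi T,
        x * (a / N' x) * Real.exp (-(a * ∫ u in T..x, 1 / N' u)) := by
      rw [setIntegral_congr_fun measurableSet_Ioi (fun x hx => hg'N x hx)]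
      exact integral_const_mul E _
    have hEbound : E ≤ Real.exp (-(a * τB / ε)) := by
      rw [hEdef]
      apply Real.exp_le_exp.mpr
      have h1 : a * (τB/ε) ≤ a * C := mul_le_mul_of_nonneg_left hCge ha0.le
      have h2 : a * τB / ε = a * (τB / ε) := by ring
      linarith
    have h3 : (∫ x in Set.Ioi T, x * (a / N' x) *
          Real.exp (-(a * ∫ u in T..x, 1 / N' u)))
        - (∫ x in Set.Ioi T, x * (a / N x) *
          Real.exp (-(a * ∫ u in T..x, 1 / N u))) ≤ (J:ℝ) * δ / a := by
      have h4 : hiv / a - h / a = ((J:ℝ) * δ) / a := by rw [hhiv]; ring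
      linarith
    have hdiff : firstCoalTime η' a - firstCoalTime η a ≤ E * ((J:ℝ) * δ / a) := by
      rw [hsplitg, hsplitg', hIocEq, hIoiVal, hIoiVal']
      have h6 := mul_le_mul_of_nonneg_left h3 hE0
      nlinarith [h6]
    have h8 : E * ((J:ℝ) * δ / a) ≤ Real.exp (-(a * τB / ε)) * ((J:ℝ) * δ / a) :=
      mul_le_mul_of_nonneg_right hEbound
        (by positivity)
    have h9 : Real.exp (-(a * τB / ε)) * ((J:ℝ) * δ / a)
        = (J:ℝ) * (δ / a) * Real.exp (-(a * τB / ε)) := by ring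
    linarith
end

section
/- (Varshamov–Gilbert) For every integer J ≥ 8 there exists a subset X = {w^0, w^1, …, w^M} of the hypercube {0,1}^J such that w^0 = (0,…,0), M ≥ 2^{J/8}, and the Hamming distance between any two distinct elements of X is at least J/8. -/
open Finset

private lemma vg_base (J : ℕ) (hJ : 8 ≤ J) : 2 ^ (9 * J + 8) ≤ 3 ^ (7 * J) := by
  induction J, hJ using Nat.le_induction with
  | base => norm_num
  | succ n hn ih =>
    have h1 : 2 ^ (9 * (n + 1) + 8) = 2 ^ (9 * n + 8) * 512 := by ring
    have h2 : 3 ^ (7 * (n + 1)) = 3 ^ (7 * n) * 2187 := by ring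
    rw [h1, h2]
    exact Nat.mul_le_mul ih (by norm_num)

private lemma vg_ball (J r : ℕ) (x : Fin J → Bool) :
    (Finset.univ.filter (fun y : Fin J → Bool => hammingDist x y ≤ r)).card
      ≤ ∑ k ∈ Finset.range (r + 1), J.choose k := by
  classical
  set T := (Finset.range (r + 1)).biUnion
    (fun k => Finset.powersetCard k (Finset.univ : Finset (Fin J))) with hT
  have hinj : ∀ y ∈ Finset.univ.filter (fun y : Fin J → Bool => hammingDist x y ≤ r),
      (Finset.univ.filter (fun i => x i ≠ y i)) ∈ T := by
    intro y hy
    simp only [Finset.mem_filter, Finset.mem_univ, true_and] at hy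
    rw [hT, Finset.mem_biUnion]
    refine ⟨(Finset.univ.filter (fun i => x i ≠ y i)).card, ?_, ?_⟩
    · rw [Finset.mem_range]
      have : hammingDist x y = (Finset.univ.filter (fun i => x i ≠ y i)).card := rfl
      omega
    · rw [Finset.mem_powersetCard]
      exact ⟨Finset.subset_univ _, rfl⟩
  have hcard : (Finset.univ.filter (fun y : Fin J → Bool => hammingDist x y ≤ r)).card ≤ T.card := by
    apply Finset.card_le_card_of_injOn _ hinj
    intro y _ y' _ h
    funext i
    have := Finset.ext_iff.1 h i
    simp only [Finset.mem_filter, Finset.mem_univ, true_and] at this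
    cases hx : x i <;> cases hy : y i <;> cases hy' : y' i <;> simp_all
  refine hcard.trans (Finset.card_biUnion_le.trans ?_)
  apply Finset.sum_le_sum
  intro k _
  rw [Finset.card_powersetCard, Finset.card_univ, Fintype.card_fin]

private lemma vg_sum (J r : ℕ) (hr : r ≤ J) :
    (∑ k ∈ Finset.range (r + 1), J.choose k) * 3 ^ (J - r) ≤ 4 ^ J := by
  rw [Finset.sum_mul]
  have h1 : ∑ k ∈ Finset.range (r + 1), J.choose k * 3 ^ (J - r)
      ≤ ∑ k ∈ Finset.range (r + 1), J.choose k * 3 ^ (J - k) := by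
    apply Finset.sum_le_sum
    intro k hk
    rw [Finset.mem_range] at hk
    exact Nat.mul_le_mul_left _ (Nat.pow_le_pow_right (by norm_num) (by omega))
  have h2 : ∑ k ∈ Finset.range (r + 1), J.choose k * 3 ^ (J - k)
      ≤ ∑ k ∈ Finset.range (J + 1), J.choose k * 3 ^ (J - k) :=
    Finset.sum_le_sum_of_subset (Finset.range_subset_range.2 (by omega))
  have h3 : (4 : ℕ) ^ J = ∑ k ∈ Finset.range (J + 1), J.choose k * 3 ^ (J - k) := by
    have := add_pow (1 : ℕ) 3 J
    norm_num at this
    rw [this]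
    apply Finset.sum_congr rfl
    intro k _
    ring
  omega

/-- Varshamov–Gilbert: for every `J ≥ 8` there is a family `w^0, …, w^M` in `{0,1}^J`
with `w^0 = 0`, `M ≥ 2^{J/8}`, and pairwise Hamming distance at least `J/8`. -/
theorem varshamov_gilbert (J : ℕ) (hJ : 8 ≤ J) :
    ∃ (M : ℕ) (w : Fin (M + 1) → (Fin J → Bool)),
      w 0 = (fun _ => false) ∧
      (2 : ℝ) ^ ((J : ℝ) / 8) ≤ M ∧
      ∀ a b : Fin (M + 1), a ≠ b →
        (J : ℝ) / 8 ≤ (Finset.univ.filter (fun i => w a i ≠ w b i)).card := by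
  classical
  set s : ℕ := (J + 7) / 8 with hs
  set r : ℕ := s - 1 with hrdef
  have hs1 : 1 ≤ s := by omega
  have hrJ : r ≤ J := by omega
  have h8r : 8 * r + 1 ≤ J := by omega
  -- maximal code containing 0
  set P : Finset (Fin J → Bool) → Prop := fun C =>
    (fun _ => false) ∈ C ∧ ∀ a ∈ C, ∀ b ∈ C, a ≠ b → s ≤ hammingDist a b with hP
  have hP0 : P {fun _ => false} := by
    constructor
    · exact Finset.mem_singleton_self _
    · intro a ha b hb hab
      rw [Finset.mem_singleton] at ha hb
      exact absurd (ha.trans hb.symm) hab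
  obtain ⟨C, hCmem, hCmax⟩ := Finset.exists_max_image
    (Finset.univ.filter P) Finset.card ⟨{fun _ => false}, Finset.mem_filter.2 ⟨Finset.mem_univ _, hP0⟩⟩
  obtain ⟨h0C, hCdist⟩ : P C := (Finset.mem_filter.1 hCmem).2
  -- covering property from maximality
  have hcover : ∀ x : Fin J → Bool, ∃ c ∈ C, hammingDist c x ≤ r := by
    intro x
    by_contra hx
    push_neg at hx
    have hxC : x ∉ C := by
      intro hxC
      have := hx x hxC
      rw [hammingDist_self] at this
      omega
    have hPins : P (insert x C) := by
      constructor
      · exact Finset.mem_insert_of_mem h0C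
      · intro a ha b hb hab
        rw [Finset.mem_insert] at ha hb
        rcases ha with rfl | ha <;> rcases hb with rfl | hb
        · exact absurd rfl hab
        · rw [hammingDist_comm]
          have := hx b hb; omega
        · have := hx a ha; omega
        · exact hCdist a ha b hb hab
    have := hCmax (insert x C) (Finset.mem_filter.2 ⟨Finset.mem_univ _, hPins⟩)
    rw [Finset.card_insert_of_notMem hxC] at this
    omega
  set V : ℕ := ∑ k ∈ Finset.range (r + 1), J.choose k with hV
  set N : ℕ := C.card with hNdef
  have hN1 : 1 ≤ N := Finset.card_pos.2 ⟨_, h0C⟩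
  -- counting
  have hcount : 2 ^ J ≤ N * V := by
    have hsub : (Finset.univ : Finset (Fin J → Bool)) ⊆
        C.biUnion (fun c => Finset.univ.filter (fun y => hammingDist c y ≤ r)) := by
      intro x _
      obtain ⟨c, hc, hdist⟩ := hcover x
      exact Finset.mem_biUnion.2 ⟨c, hc, by simp [hdist]⟩
    calc 2 ^ J = (Finset.univ : Finset (Fin J → Bool)).card := by
          simp [Finset.card_univ]
      _ ≤ (C.biUnion (fun c => Finset.univ.filter (fun y => hammingDist c y ≤ r))).card :=
          Finset.card_le_card hsub
      _ ≤ ∑ c ∈ C, (Finset.univ.filter (fun y => hammingDist c y ≤ r)).card :=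
          Finset.card_biUnion_le
      _ ≤ ∑ _c ∈ C, V := Finset.sum_le_sum (fun c _ => vg_ball J r c)
      _ = N * V := by rw [Finset.sum_const, smul_eq_mul]
  have hV1 : 1 ≤ V := by
    have : J.choose 0 ≤ V := Finset.single_le_sum (f := fun k => J.choose k)
      (fun _ _ => Nat.zero_le _) (Finset.mem_range.2 (by omega))
    simpa using this
  -- real arithmetic
  set x : ℝ := (2 : ℝ) ^ ((J : ℝ) / 8) with hxdef
  have hx0 : (0 : ℝ) < x := Real.rpow_pos_of_pos (by norm_num) _
  have hx1 : (1 : ℝ) ≤ x := by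
    rw [hxdef, show (1 : ℝ) = (2 : ℝ) ^ (0 : ℝ) by rw [Real.rpow_zero]]
    exact Real.rpow_le_rpow_of_exponent_le (by norm_num) (by positivity)
  have key : x * 2 ^ (J + 1) ≤ (3 : ℝ) ^ (J - r) := by
    have h8 : (x * 2 ^ (J + 1)) ^ 8 ≤ ((3 : ℝ) ^ (J - r)) ^ 8 := by
      have hx8 : x ^ 8 = (2 : ℝ) ^ J := by
        rw [hxdef, ← Real.rpow_natCast ((2:ℝ) ^ ((J:ℝ)/8)) 8, ← Real.rpow_mul (by norm_num),
          show (J:ℝ)/8 * (8:ℕ) = ((J:ℕ):ℝ) by push_cast; ring, Real.rpow_natCast]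
      rw [mul_pow, hx8, ← pow_mul, ← pow_mul, ← pow_add]
      have hnat : 2 ^ (J + (J + 1) * 8) ≤ 3 ^ ((J - r) * 8) := by
        have h1 : 2 ^ (9 * J + 8) ≤ 3 ^ (7 * J) := vg_base J hJ
        have h2 : (3 : ℕ) ^ (7 * J) ≤ 3 ^ ((J - r) * 8) :=
          Nat.pow_le_pow_right (by norm_num) (by omega)
        rw [show J + (J + 1) * 8 = 9 * J + 8 by ring]
        exact h1.trans h2
      exact_mod_cast hnat
    exact (pow_le_pow_iff_left₀ (by positivity) (by positivity) (by norm_num)).1 h8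
  -- deduce x + 1 ≤ N
  have hxN : x + 1 ≤ (N : ℝ) := by
    have hVpos : (0 : ℝ) < (V : ℝ) := by exact_mod_cast hV1
    have h3pos : (0 : ℝ) < (3 : ℝ) ^ (J - r) := by positivity
    have hVr : (V : ℝ) * 3 ^ (J - r) ≤ 4 ^ J := by exact_mod_cast vg_sum J r hrJ
    have hNV : (2 : ℝ) ^ J ≤ (N : ℝ) * V := by exact_mod_cast hcount
    have h4 : (4 : ℝ) ^ J = 2 ^ J * 2 ^ J := by
      rw [← pow_add, show J + J = 2 * J by ring, pow_mul]; norm_num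
    -- 2 * x * V ≤ 2 ^ J
    have h2x : 2 * x * V ≤ (2 : ℝ) ^ J := by
      rw [← mul_le_mul_iff_of_pos_right h3pos]
      calc 2 * x * V * 3 ^ (J - r) = x * (V * 3 ^ (J - r)) * 2 := by ring
        _ ≤ x * 4 ^ J * 2 := by
            have := mul_le_mul_of_nonneg_left hVr (le_of_lt hx0)
            nlinarith
        _ = (x * 2 ^ (J + 1)) * 2 ^ J := by rw [h4]; ring
        _ ≤ 3 ^ (J - r) * 2 ^ J := by
            apply mul_le_mul_of_nonneg_right key (by positivity)
        _ = 2 ^ J * 3 ^ (J - r) := by ring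
    have h2xN : 2 * x ≤ (N : ℝ) := by
      have := h2x.trans hNV
      exact le_of_mul_le_mul_right (by nlinarith) hVpos
    nlinarith
  -- build the family
  refine ⟨N - 1, ?_⟩
  have hNM : N - 1 + 1 = N := by omega
  let e : C ≃ Fin N := C.equivFin
  let z0 : C := ⟨fun _ => false, h0C⟩
  set w : Fin (N - 1 + 1) → (Fin J → Bool) :=
    fun i => ((e.symm (Equiv.swap (Fin.cast hNM 0) (e z0) (Fin.cast hNM i)) : C) : Fin J → Bool)
    with hw
  have hw_inj : Function.Injective w := by
    intro a b hab
    have h1 : e.symm (Equiv.swap (Fin.cast hNM 0) (e z0) (Fin.cast hNM a))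
        = e.symm (Equiv.swap (Fin.cast hNM 0) (e z0) (Fin.cast hNM b)) := Subtype.ext hab
    have h2 := (Equiv.swap _ _).injective (e.symm.injective h1)
    have h3 := congrArg Fin.val h2
    simp only [Fin.coe_cast] at h3
    exact Fin.ext h3
  have hwC : ∀ i, w i ∈ C := fun i =>
    (e.symm (Equiv.swap (Fin.cast hNM 0) (e z0) (Fin.cast hNM i))).2
  refine ⟨w, ?_, ?_, ?_⟩
  · show w 0 = _
    rw [hw]
    simp only [Equiv.swap_apply_left, Equiv.symm_apply_apply]; rfl
  · have hcast : ((N - 1 : ℕ) : ℝ) = (N : ℝ) - 1 := by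
      rw [Nat.cast_sub hN1]; norm_num
    rw [hcast]
    linarith
  · intro a b hab
    have hne : w a ≠ w b := fun h => hab (hw_inj h)
    have hd : s ≤ hammingDist (w a) (w b) := hCdist _ (hwC a) _ (hwC b) hne
    have hdd : hammingDist (w a) (w b)
        = (Finset.univ.filter (fun i => w a i ≠ w b i)).card := rfl
    rw [div_le_iff₀ (by norm_num)]
    have h8d : J ≤ (Finset.univ.filter (fun i => w a i ≠ w b i)).card * 8 := by
      rw [← hdd]; omega
    exact_mod_cast h8d
end

section
/- (Generalized Fano lower bound) Let Θ be a parameter set with a pseudometric d, and let {P_θ : θ ∈ Θ} be probability distributions on a finite set. Suppose θ_1, …, θ_r ∈ Θ (r ≥ 2) satisfy d(θ_a, θ_b) ≥ α for all a ≠ b and D(P_{θ_a} ‖ P_{θ_b}) ≤ β for all a, b. Then for any estimator θ̂ based on s i.i.d. observations X_1,…,X_s ~ P_θ, we have inf_{θ̂} max_{a} E_{θ_a}[d(θ̂(X_1,…,X_s), θ_a)] ≥ (α/2)·(1 − (s·β + log 2)/log r). -/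
open Finset

private lemma gibbs_ineq {ι : Type*} [Fintype ι] {p q : ι → ℝ} (hp : ∀ i, 0 < p i)
    (hq : ∀ i, 0 < q i) (hps : ∑ i, p i = 1) (hqs : ∑ i, q i ≤ 1) :
    0 ≤ ∑ i, p i * Real.log (p i / q i) := by
  have h1 : ∑ i, p i * Real.log (q i / p i) ≤ 0 := by
    have hpt : ∀ i : ι, p i * Real.log (q i / p i) ≤ q i - p i := by
      intro i
      have h := Real.log_le_sub_one_of_pos (div_pos (hq i) (hp i))
      have h2 := mul_le_mul_of_nonneg_left h (hp i).le
      calc p i * Real.log (q i / p i) ≤ p i * (q i / p i - 1) := h2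
        _ = q i - p i := by field_simp [(hp i).ne']
    calc ∑ i, p i * Real.log (q i / p i) ≤ ∑ i, (q i - p i) :=
          Finset.sum_le_sum fun i _ => hpt i
      _ = (∑ i, q i) - ∑ i, p i := Finset.sum_sub_distrib _ _
      _ ≤ 0 := by rw [hps]; linarith
  have h2 : ∑ i, p i * Real.log (p i / q i) = -∑ i, p i * Real.log (q i / p i) := by
    rw [← Finset.sum_neg_distrib]
    refine Finset.sum_congr rfl fun i _ => ?_
    rw [Real.log_div (hp i).ne' (hq i).ne', Real.log_div (hq i).ne' (hp i).ne']
    ring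
  linarith

private lemma sum_prod_pi {k : ℕ} (p : Fin k → ℝ) (hps : ∑ y, p y = 1) :
    ∀ s : ℕ, ∑ x : Fin s → Fin k, ∏ i, p (x i) = 1 := by
  intro s
  induction s with
  | zero => simp
  | succ n ih =>
    have key := Fintype.sum_equiv (Fin.consEquiv fun _ : Fin (n + 1) => Fin k)
      (fun yx : Fin k × (Fin n → Fin k) => p yx.1 * ∏ i, p (yx.2 i))
      (fun x : Fin (n + 1) → Fin k => ∏ i, p (x i))
      (fun yx => by simp [Fin.consEquiv, Fin.prod_univ_succ])
    rw [← key, Fintype.sum_prod_type]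
    simp only [← Finset.mul_sum, ih, mul_one]
    exact hps

private lemma kl_prod_le {k : ℕ} (p q : Fin k → ℝ) (hp : ∀ y, 0 < p y) (hq : ∀ y, 0 < q y)
    (hps : ∑ y, p y = 1) {β : ℝ} (hkl : ∑ y, p y * Real.log (p y / q y) ≤ β) :
    ∀ s : ℕ, ∑ x : Fin s → Fin k,
      (∏ i, p (x i)) * Real.log ((∏ i, p (x i)) / ∏ i, q (x i)) ≤ s * β := by
  intro s
  induction s with
  | zero => simp
  | succ n ih =>
    have hA : ∀ x : Fin n → Fin k, 0 < ∏ i, p (x i) := fun x => Finset.prod_pos fun i _ => hp _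
    have hBpos : ∀ x : Fin n → Fin k, 0 < ∏ i, q (x i) := fun x => Finset.prod_pos fun i _ => hq _
    have hstep : ∑ x : Fin (n + 1) → Fin k,
        (∏ i, p (x i)) * Real.log ((∏ i, p (x i)) / ∏ i, q (x i))
        = ∑ yx : Fin k × (Fin n → Fin k), (p yx.1 * ∏ i, p (yx.2 i)) *
            (Real.log (p yx.1 / q yx.1) +
              Real.log ((∏ i, p (yx.2 i)) / ∏ i, q (yx.2 i))) := by
      refine (Fintype.sum_equiv (Fin.consEquiv fun _ : Fin (n + 1) => Fin k) _ _ fun yx => ?_).symm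
      obtain ⟨y, x⟩ := yx
      have e1 : ∏ i, p ((Fin.consEquiv fun _ : Fin (n + 1) => Fin k) (y, x) i)
          = p y * ∏ i, p (x i) := by simp [Fin.consEquiv, Fin.prod_univ_succ]
      have e2 : ∏ i, q ((Fin.consEquiv fun _ : Fin (n + 1) => Fin k) (y, x) i)
          = q y * ∏ i, q (x i) := by simp [Fin.consEquiv, Fin.prod_univ_succ]
      dsimp only
      rw [e1, e2, mul_div_mul_comm,
        Real.log_mul (div_pos (hp y) (hq y)).ne' (div_pos (hA x) (hBpos x)).ne']
    rw [hstep, Fintype.sum_prod_type]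
    have inner : ∀ y : Fin k, ∑ x : Fin n → Fin k,
        (p y * ∏ i, p (x i)) * (Real.log (p y / q y) +
          Real.log ((∏ i, p (x i)) / ∏ i, q (x i)))
        = p y * Real.log (p y / q y)
          + p y * ∑ x : Fin n → Fin k,
              (∏ i, p (x i)) * Real.log ((∏ i, p (x i)) / ∏ i, q (x i)) := by
      intro y
      have hpt : ∀ x : Fin n → Fin k,
          (p y * ∏ i, p (x i)) * (Real.log (p y / q y) +
            Real.log ((∏ i, p (x i)) / ∏ i, q (x i)))
          = p y * Real.log (p y / q y) * (∏ i, p (x i))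
            + p y * ((∏ i, p (x i)) * Real.log ((∏ i, p (x i)) / ∏ i, q (x i))) :=
        fun x => by ring
      rw [Finset.sum_congr rfl fun x _ => hpt x, Finset.sum_add_distrib,
        ← Finset.mul_sum, ← Finset.mul_sum, sum_prod_pi p hps n, mul_one]
    rw [Finset.sum_congr rfl fun y _ => inner y, Finset.sum_add_distrib, ← Finset.sum_mul, hps,
      one_mul]
    push_cast
    nlinarith [ih, hkl]

private lemma fano_aux {X : Type*} [Fintype X] {r : ℕ} (hr : 2 ≤ r)
    (Q : Fin r → X → ℝ) (hQpos : ∀ a x, 0 < Q a x) (hQsum : ∀ a, ∑ x, Q a x = 1)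
    (ψ : X → Fin r) {B : ℝ}
    (hB : ∀ a b, ∑ x, Q a x * Real.log (Q a x / Q b x) ≤ B) :
    ∃ a : Fin r, 1 - (B + Real.log 2) / Real.log (r : ℝ) ≤
      ∑ x ∈ Finset.univ.filter (fun x => ψ x ≠ a), Q a x := by
  have hrn : 0 < r := by omega
  have hr0 : (0 : ℝ) < r := by exact_mod_cast hrn
  have hr2 : (2 : ℝ) ≤ r := by exact_mod_cast hr
  have hlogr : 0 < Real.log r := Real.log_pos (by linarith)
  set ε : Fin r → ℝ := fun a => ∑ x ∈ Finset.univ.filter (fun x => ψ x ≠ a), Q a x with hε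
  set M : X → ℝ := fun x => (∑ b, Q b x) / r with hM
  have hMpos : ∀ x, 0 < M x := fun x =>
    div_pos (Finset.sum_pos (fun b _ => hQpos b x) ⟨⟨0, hrn⟩, Finset.mem_univ _⟩) hr0
  have hQM : ∀ x, ∑ b, Q b x = r * M x := fun x => by rw [hM]; field_simp
  have hMsum : ∑ x, M x = 1 := by
    have h1 : ∑ x, ∑ b, Q b x = (r : ℝ) := by
      rw [Finset.sum_comm, Finset.sum_congr rfl fun b _ => hQsum b, Finset.sum_const,
        Finset.card_fin, nsmul_eq_mul, mul_one]
    simp only [hM]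
    rw [← Finset.sum_div, h1]
    field_simp
  -- KL(Q_a ‖ M) ≤ B
  have hDM : ∀ a, ∑ x, Q a x * Real.log (Q a x / M x) ≤ B := by
    intro a
    have key : ∀ x, (r : ℝ) * Real.log (Q a x / M x) ≤ ∑ b, Real.log (Q a x / Q b x) := by
      intro x
      have h0 : ∑ b, Real.log (Q b x / M x) ≤ 0 := by
        calc ∑ b, Real.log (Q b x / M x) ≤ ∑ b, (Q b x / M x - 1) :=
              Finset.sum_le_sum fun b _ =>
                Real.log_le_sub_one_of_pos (div_pos (hQpos b x) (hMpos x))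
          _ = (∑ b, Q b x) / M x - r := by
              rw [Finset.sum_sub_distrib, ← Finset.sum_div, Finset.sum_const,
                Finset.card_fin, nsmul_eq_mul, mul_one]
          _ = 0 := by
              rw [hQM x, mul_div_assoc, div_self (hMpos x).ne', mul_one, sub_self]
      have hpt : ∀ b : Fin r, Real.log (Q a x / M x) - Real.log (Q b x / M x)
          = Real.log (Q a x / Q b x) := by
        intro b
        rw [Real.log_div (hQpos a x).ne' (hMpos x).ne',
          Real.log_div (hQpos b x).ne' (hMpos x).ne',
          Real.log_div (hQpos a x).ne' (hQpos b x).ne']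
        ring
      have hexp : ∑ b, Real.log (Q a x / Q b x)
          = (r : ℝ) * Real.log (Q a x / M x) - ∑ b, Real.log (Q b x / M x) := by
        rw [Finset.sum_congr rfl fun b _ => (hpt b).symm, Finset.sum_sub_distrib,
          Finset.sum_const, Finset.card_fin, nsmul_eq_mul]
      rw [hexp]
      linarith
    have h1 : ∀ x, Q a x * Real.log (Q a x / M x)
        ≤ (∑ b, Q a x * Real.log (Q a x / Q b x)) / r := by
      intro x
      rw [← Finset.mul_sum, le_div_iff₀ hr0]
      have h2 := mul_le_mul_of_nonneg_left (key x) (hQpos a x).le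
      nlinarith [h2]
    calc ∑ x, Q a x * Real.log (Q a x / M x)
        ≤ ∑ x, (∑ b, Q a x * Real.log (Q a x / Q b x)) / r :=
          Finset.sum_le_sum fun x _ => h1 x
      _ = (∑ b, ∑ x, Q a x * Real.log (Q a x / Q b x)) / r := by
          rw [← Finset.sum_div, Finset.sum_comm]
      _ ≤ (∑ _b : Fin r, B) / r := by
          gcongr with b _
          exact hB a b
      _ = B := by
          rw [Finset.sum_const, Finset.card_fin, nsmul_eq_mul]
          field_simp
  -- comparison measure
  set c : Fin r → X → ℝ := fun a x => if a = ψ x then (2 : ℝ)⁻¹ else (2 * (r : ℝ))⁻¹ with hc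
  have hcpos : ∀ a x, 0 < c a x := by
    intro a x; rw [hc]; dsimp only; split <;> positivity
  have hcsum : ∀ x, ∑ a, c a x ≤ 1 := by
    intro x
    have hrw : ∑ a, c a x
        = ∑ a : Fin r, ((2 * (r : ℝ))⁻¹ + if a = ψ x then (2 : ℝ)⁻¹ - (2 * (r : ℝ))⁻¹ else 0) :=
      Finset.sum_congr rfl fun a _ => by rw [hc]; dsimp only; split <;> ring
    rw [hrw, Finset.sum_add_distrib, Finset.sum_ite_eq' Finset.univ (ψ x)
      (fun _ => (2 : ℝ)⁻¹ - (2 * (r : ℝ))⁻¹)]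
    simp only [Finset.mem_univ, if_true, Finset.sum_const, Finset.card_fin, nsmul_eq_mul]
    have h2r : (0 : ℝ) < 2 * r := by positivity
    have e : (r : ℝ) * (2 * (r : ℝ))⁻¹ = 2⁻¹ := by field_simp
    have hpos : (0 : ℝ) < (2 * (r : ℝ))⁻¹ := by positivity
    rw [e]
    linarith
  -- Gibbs applied to the joint measure
  have hg := gibbs_ineq (p := fun ax : Fin r × X => Q ax.1 ax.2 / r)
      (q := fun ax : Fin r × X => M ax.2 * c ax.1 ax.2)
      (fun ax => div_pos (hQpos ax.1 ax.2) hr0)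
      (fun ax => mul_pos (hMpos ax.2) (hcpos ax.1 ax.2))
      (by
        rw [Fintype.sum_prod_type]
        have h1 : ∀ a : Fin r, ∑ x, Q a x / (r : ℝ) = 1 / r := by
          intro a; rw [← Finset.sum_div, hQsum]
        rw [Finset.sum_congr rfl fun a _ => h1 a, Finset.sum_const, Finset.card_fin,
          nsmul_eq_mul]
        field_simp)
      (by
        calc ∑ ax : Fin r × X, M ax.2 * c ax.1 ax.2 = ∑ x, ∑ a, M x * c a x := by
              rw [Fintype.sum_prod_type, Finset.sum_comm]
          _ ≤ ∑ x, M x := by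
              refine Finset.sum_le_sum fun x _ => ?_
              rw [← Finset.mul_sum]
              calc M x * ∑ a, c a x ≤ M x * 1 :=
                    mul_le_mul_of_nonneg_left (hcsum x) (hMpos x).le
                _ = M x := mul_one _
          _ = 1 := hMsum)
  -- expand the Gibbs sum
  have point : ∀ (a : Fin r) (x : X), (Q a x / r) * Real.log ((Q a x / r) / (M x * c a x))
      = (Q a x * Real.log (Q a x / M x)) / r - (Q a x * Real.log r) / r
        + (Q a x * Real.log 2) / r
        + (if ψ x ≠ a then (Q a x * Real.log r) / r else 0) := by
    intro a x
    have hlogc : Real.log (c a x)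
        = (if ψ x ≠ a then -(Real.log 2 + Real.log r) else -Real.log 2) := by
      rw [hc]; dsimp only
      by_cases h : a = ψ x
      · rw [if_pos h, if_neg (by simp [h]), Real.log_inv]
      · rw [if_neg h, if_pos (Ne.symm h), Real.log_inv,
          Real.log_mul (by norm_num) hr0.ne']
    have e1 : Real.log ((Q a x / r) / (M x * c a x))
        = Real.log (Q a x / M x) - Real.log r - Real.log (c a x) := by
      rw [Real.log_div (div_pos (hQpos a x) hr0).ne' (mul_pos (hMpos x) (hcpos a x)).ne',
          Real.log_div (hQpos a x).ne' hr0.ne',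
          Real.log_mul (hMpos x).ne' (hcpos a x).ne',
          Real.log_div (hQpos a x).ne' (hMpos x).ne']
      ring
    rw [e1, hlogc]
    by_cases h : ψ x ≠ a
    · rw [if_pos h, if_pos h]; ring
    · rw [if_neg h, if_neg h]; ring
  have Tt : ∀ (a : Fin r) (t : ℝ), ∑ x, (Q a x * t) / (r : ℝ) = t / r := by
    intro a t; rw [← Finset.sum_div, ← Finset.sum_mul, hQsum, one_mul]
  have T4 : ∀ a : Fin r, (∑ x, if ψ x ≠ a then (Q a x * Real.log r) / (r : ℝ) else 0)
      = ε a * Real.log r / r := by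
    intro a
    rw [← Finset.sum_filter, ← Finset.sum_div, ← Finset.sum_mul]
  have hDM' : ∀ a : Fin r, ∑ x, (Q a x * Real.log (Q a x / M x)) / (r : ℝ) ≤ B / r := by
    intro a
    rw [← Finset.sum_div]
    gcongr
    exact hDM a
  have inner : ∀ a : Fin r,
      ∑ x, ((Q a x * Real.log (Q a x / M x)) / (r : ℝ) - (Q a x * Real.log r) / r
        + (Q a x * Real.log 2) / r + if ψ x ≠ a then (Q a x * Real.log r) / r else 0)
      = (∑ x, (Q a x * Real.log (Q a x / M x)) / (r : ℝ)) - Real.log r / r + Real.log 2 / r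
        + ε a * Real.log r / r := by
    intro a
    rw [Finset.sum_add_distrib, Finset.sum_add_distrib, Finset.sum_sub_distrib,
      Tt a (Real.log r), Tt a (Real.log 2), T4 a]
  have hkey : 0 ≤ B - Real.log r + Real.log 2 + (∑ a, ε a) * Real.log r / r := by
    have step1 : ∑ ax : Fin r × X, (Q ax.1 ax.2 / (r : ℝ)) *
        Real.log ((Q ax.1 ax.2 / r) / (M ax.2 * c ax.1 ax.2))
        = ∑ a, ((∑ x, (Q a x * Real.log (Q a x / M x)) / (r : ℝ)) - Real.log r / r
            + Real.log 2 / r + ε a * Real.log r / r) := by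
      rw [Fintype.sum_prod_type]
      refine Finset.sum_congr rfl fun a _ => ?_
      rw [Finset.sum_congr rfl fun x _ => point a x, inner a]
    have step2 : ∑ a, ((∑ x, (Q a x * Real.log (Q a x / M x)) / (r : ℝ)) - Real.log r / r
        + Real.log 2 / r + ε a * Real.log r / r)
        ≤ ∑ a : Fin r, (B / r - Real.log r / r + Real.log 2 / r + ε a * Real.log r / r) := by
      refine Finset.sum_le_sum fun a _ => ?_
      have := hDM' a
      linarith
    have step3 : ∑ a : Fin r, (B / r - Real.log r / r + Real.log 2 / r + ε a * Real.log r / r)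
        = B - Real.log r + Real.log 2 + (∑ a, ε a) * Real.log r / r := by
      rw [Finset.sum_add_distrib, Finset.sum_add_distrib, Finset.sum_sub_distrib,
        Finset.sum_const, Finset.sum_const, Finset.sum_const, Finset.card_fin, nsmul_eq_mul,
        nsmul_eq_mul, nsmul_eq_mul, ← Finset.sum_div, ← Finset.sum_mul]
      field_simp
    have := hg
    rw [step1] at this
    have h4 := le_trans this step2
    rw [step3] at h4
    linarith
  -- from key inequality to the Fano bound on the average
  have hfrac : 1 - (B + Real.log 2) / Real.log r ≤ (∑ a, ε a) / r := by
    have h1 : (1 - (B + Real.log 2) / Real.log r) * Real.log r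
        ≤ ((∑ a, ε a) / r) * Real.log r := by
      have e1 : (1 - (B + Real.log 2) / Real.log r) * Real.log r
          = Real.log r - (B + Real.log 2) := by field_simp
      have e2 : ((∑ a, ε a) / r) * Real.log r = (∑ a, ε a) * Real.log r / r := by ring
      rw [e1, e2]
      linarith
    exact le_of_mul_le_mul_right h1 hlogr
  have hmax : ∃ a : Fin r, (∑ b, ε b) / r ≤ ε a := by
    by_contra h
    push_neg at h
    have hlt := Finset.sum_lt_sum_of_nonempty
      (⟨⟨0, hrn⟩, Finset.mem_univ _⟩ : (Finset.univ : Finset (Fin r)).Nonempty)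
      (fun a _ => h a)
    rw [Finset.sum_const, Finset.card_fin, nsmul_eq_mul] at hlt
    have he : (r : ℝ) * ((∑ b, ε b) / r) = ∑ b, ε b := by field_simp
    linarith
  obtain ⟨a, ha⟩ := hmax
  refine ⟨a, ?_⟩
  have := le_trans hfrac ha
  simpa [hε] using this

/-- Generalized Fano lower bound: if `θ_1, …, θ_r` (`r ≥ 2`) are `α`-separated in a
pseudometric `d` and the finitely-supported distributions `P_{θ_a}` satisfy
`D(P_{θ_a} ‖ P_{θ_b}) ≤ β` for all `a, b`, then any estimator `θ̂` based on `s` i.i.d.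
observations has `max_a E_{θ_a}[d(θ̂, θ_a)] ≥ (α/2)(1 - (s β + log 2)/log r)`. -/
theorem generalized_fano {Θ : Type*} [PseudoMetricSpace Θ]
    (k r s : ℕ) (hr : 2 ≤ r) (hk : 1 ≤ k)
    (θ : Fin r → Θ) (α β : ℝ) (hα : 0 < α) (hβ : 0 ≤ β)
    (P : Fin r → Fin k → ℝ)
    (hPpos : ∀ a x, 0 < P a x) (hPsum : ∀ a, ∑ x, P a x = 1)
    (hsep : ∀ a b : Fin r, a ≠ b → α ≤ dist (θ a) (θ b))
    (hKL : ∀ a b : Fin r, ∑ x, P a x * Real.log (P a x / P b x) ≤ β)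
    (est : (Fin s → Fin k) → Θ) :
    ∃ a : Fin r,
      (α / 2) * (1 - ((s : ℝ) * β + Real.log 2) / Real.log r) ≤
        ∑ x : Fin s → Fin k, (∏ i, P a (x i)) * dist (est x) (θ a) := by
  classical
  have hrn : 0 < r := by omega
  have hex : ∀ x : Fin s → Fin k, ∃ b : Fin r,
      ∀ c : Fin r, dist (est x) (θ b) ≤ dist (est x) (θ c) := by
    intro x
    obtain ⟨b, _, hb⟩ := Finset.exists_min_image Finset.univ (fun b => dist (est x) (θ b))
      ⟨⟨0, hrn⟩, Finset.mem_univ _⟩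
    exact ⟨b, fun c => hb c (Finset.mem_univ c)⟩
  choose ψ hψ using hex
  have hQpos : ∀ (a : Fin r) (x : Fin s → Fin k), 0 < ∏ i, P a (x i) :=
    fun a x => Finset.prod_pos fun i _ => hPpos a _
  obtain ⟨a, ha⟩ := fano_aux hr (fun a x => ∏ i, P a (x i)) hQpos
    (fun a => sum_prod_pi (P a) (hPsum a) s) ψ
    (fun a b => kl_prod_le (P a) (P b) (hPpos a) (hPpos b) (hPsum a) (hKL a b) s)
  refine ⟨a, ?_⟩
  have hdist : ∀ x, ψ x ≠ a → α / 2 ≤ dist (est x) (θ a) := by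
    intro x hne
    have h1 : α ≤ dist (θ (ψ x)) (θ a) := hsep _ _ hne
    have h2 : dist (θ (ψ x)) (θ a) ≤ dist (est x) (θ (ψ x)) + dist (est x) (θ a) := by
      rw [dist_comm (est x) (θ (ψ x))]
      exact dist_triangle _ _ _
    have h3 := hψ x a
    linarith
  have hL1 : (α / 2) * (∑ x ∈ Finset.univ.filter (fun x => ψ x ≠ a), ∏ i, P a (x i))
      ≤ ∑ x : Fin s → Fin k, (∏ i, P a (x i)) * dist (est x) (θ a) := by
    calc (α / 2) * ∑ x ∈ Finset.univ.filter (fun x => ψ x ≠ a), ∏ i, P a (x i)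
        = ∑ x ∈ Finset.univ.filter (fun x => ψ x ≠ a), (α / 2) * ∏ i, P a (x i) := by
          rw [Finset.mul_sum]
      _ ≤ ∑ x ∈ Finset.univ.filter (fun x => ψ x ≠ a),
            (∏ i, P a (x i)) * dist (est x) (θ a) := by
          refine Finset.sum_le_sum fun x hx => ?_
          rw [mul_comm (α / 2)]
          exact mul_le_mul_of_nonneg_left (hdist x (Finset.mem_filter.mp hx).2) (hQpos a x).le
      _ ≤ ∑ x : Fin s → Fin k, (∏ i, P a (x i)) * dist (est x) (θ a) :=
          Finset.sum_le_sum_of_subset_of_nonneg (Finset.filter_subset _ _)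
            (fun x _ _ => mul_nonneg (hQpos a x).le dist_nonneg)
  calc (α / 2) * (1 - ((s : ℝ) * β + Real.log 2) / Real.log r)
      ≤ (α / 2) * ∑ x ∈ Finset.univ.filter (fun x => ψ x ≠ a), ∏ i, P a (x i) :=
        mul_le_mul_of_nonneg_left ha (by linarith)
    _ ≤ _ := hL1
end
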